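/- arXiv:2501.04536 — 10 statements merged into one kernel-verified Lean document; each statement's English description precedes it below -/
import Mathlib

section
/- Let f : ℝⁿ → ℝ be convex and differentiable with ∇f Lipschitz continuous on ℝⁿ with constant L ∈ (0,∞), and suppose every level set {x ∈ ℝⁿ : f(x) ≤ c} is bounded. Let f_* = inf{f(x) : x ∈ ℝⁿ}. Let {x_k} ⊂ ℝⁿ be a sequence with f(x_{k+1}) ≤ f(x_k) for every k ≥ 0, let g_k = ∇f(x_k), and let {S_k} be a sequence of linear subspaces of ℝⁿ. Then f(x_k) → f_* as k → ∞ if and only if both dist(g_k, S_k) → 0 and f(x_{k+1}) − inf{f(x) : x ∈ x_k + S_k} → 0 as k → ∞, where dist(g, S) denotes the Euclidean distance from g to the subspace S. -/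
open Filter Topology Set RealInnerProductSpace

noncomputable section

variable {n : ℕ}

local notation "E" => EuclideanSpace ℝ (Fin n)

lemma my_fderiv_inner (f : E → ℝ) (hdiff : Differentiable ℝ f) (a v : E) :
    fderiv ℝ f a v = (inner ℝ (gradient f a) (v) : ℝ) := by
  have h := (hdiff a).hasGradientAt
  rw [hasGradientAt_iff_hasFDerivAt] at h
  rw [h.fderiv]
  simp

lemma my_line_deriv (f : E → ℝ) (hdiff : Differentiable ℝ f) (a v : E) (t : ℝ) :
    HasDerivAt (fun t : ℝ => f (a + t • v)) (inner ℝ (gradient f (a + t • v)) (v) : ℝ) t := by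
  have hc : HasDerivAt (fun t : ℝ => a + t • v) v t := by
    simpa using ((hasDerivAt_id t).smul_const v).const_add a
  have := (hdiff (a + t • v)).hasFDerivAt.comp_hasDerivAt t hc
  rw [← my_fderiv_inner f hdiff]; exact this

lemma my_first_order (f : E → ℝ) (hconv : ConvexOn ℝ Set.univ f)
    (hdiff : Differentiable ℝ f) (a b : E) :
    f a + (inner ℝ (gradient f a) (b - a) : ℝ) ≤ f b := by
  set v := b - a with hv
  set φ : ℝ → ℝ := fun t => f (a + t • v) with hφ
  have hφconv : ConvexOn ℝ Set.univ φ := by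
    have := hconv.comp_affineMap (AffineMap.lineMap a b : ℝ →ᵃ[ℝ] E)
    simp only [Set.preimage_univ] at this
    suffices hφe : φ = f ∘ (AffineMap.lineMap a b : ℝ →ᵃ[ℝ] E) by rw [hφe]; exact this
    funext t
    simp [φ, AffineMap.lineMap_apply_module', v, add_comm]
  have hd : HasDerivAt φ (inner ℝ (gradient f a) (v) : ℝ) 0 := by
    have := my_line_deriv f hdiff a v 0
    simpa using this
  have := hφconv.le_slope_of_hasDerivAt (Set.mem_univ (0:ℝ)) (Set.mem_univ (1:ℝ))
    one_pos hd
  rw [slope_def_field] at this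
  have h1 : φ 1 = f b := by simp [φ, v]
  have h0 : φ 0 = f a := by simp [φ]
  rw [h1, h0] at this
  simp only [sub_zero, div_one] at this
  linarith

lemma my_descent (f : E → ℝ) (hdiff : Differentiable ℝ f)
    (L : ℝ) (hL : 0 < L)
    (hlip : ∀ y z, ‖gradient f y - gradient f z‖ ≤ L * ‖y - z‖)
    (a v : E) :
    f (a + v) ≤ f a + (inner ℝ (gradient f a) (v) : ℝ) + L * ‖v‖ ^ 2 := by
  set h : ℝ → ℝ := fun t => f (a + t • v) - t * (inner ℝ (gradient f a) (v) : ℝ) with hh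
  have hd : ∀ t : ℝ, HasDerivAt h ((inner ℝ (gradient f (a + t • v) - gradient f a) (v) : ℝ)) t := by
    intro t
    have h1 := my_line_deriv f hdiff a v t
    have h2 : HasDerivAt (fun t : ℝ => t * (inner ℝ (gradient f a) (v) : ℝ)) (inner ℝ (gradient f a) (v) : ℝ) t := by
      simpa using (hasDerivAt_id t).mul_const (inner ℝ (gradient f a) (v) : ℝ)
    have := h1.sub h2
    rw [inner_sub_left]; exact this
  have key : ‖h 1 - h 0‖ ≤ L * ‖v‖ ^ 2 := by
    apply norm_image_sub_le_of_norm_deriv_le_segment_01'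
      (f' := fun t => (inner ℝ (gradient f (a + t • v) - gradient f a) (v) : ℝ))
      (fun t _ => (hd t).hasDerivWithinAt)
    intro t ht
    have h1 : |(inner ℝ (gradient f (a + t • v) - gradient f a) (v) : ℝ)| ≤
        ‖gradient f (a + t • v) - gradient f a‖ * ‖v‖ := abs_real_inner_le_norm _ _
    have h2 : ‖gradient f (a + t • v) - gradient f a‖ ≤ L * ‖t • v‖ := by
      simpa using hlip (a + t • v) a
    have h3 : ‖t • v‖ ≤ ‖v‖ := by
      rw [norm_smul]
      have : |t| ≤ 1 := by
        rw [abs_le]; constructor <;> [linarith [ht.1]; linarith [ht.2.le]]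
      calc ‖t‖ * ‖v‖ ≤ 1 * ‖v‖ := by
            apply mul_le_mul_of_nonneg_right _ (norm_nonneg v)
            simpa [Real.norm_eq_abs]
        _ = ‖v‖ := one_mul _
    calc ‖(inner ℝ (gradient f (a + t • v) - gradient f a) (v) : ℝ)‖
        ≤ ‖gradient f (a + t • v) - gradient f a‖ * ‖v‖ := h1
      _ ≤ (L * ‖t • v‖) * ‖v‖ := by
          apply mul_le_mul_of_nonneg_right h2 (norm_nonneg v)
      _ ≤ (L * ‖v‖) * ‖v‖ := by
          apply mul_le_mul_of_nonneg_right _ (norm_nonneg v)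
          exact mul_le_mul_of_nonneg_left h3 hL.le
      _ = L * ‖v‖ ^ 2 := by ring
  have h1 : h 1 = f (a + v) - (inner ℝ (gradient f a) (v) : ℝ) := by simp [h]
  have h0 : h 0 = f a := by simp [h]
  rw [h1, h0, Real.norm_eq_abs] at key
  have := abs_le.mp key
  linarith [this.1, this.2]

lemma my_minimizer (f : E → ℝ) (hdiff : Differentiable ℝ f)
    (hlevel : ∀ c : ℝ, Bornology.IsBounded {y | f y ≤ c}) :
    ∃ z : E, ∀ y, f z ≤ f y := by
  have hcont : Continuous f := hdiff.continuous
  have hK : IsCompact {y : E | f y ≤ f 0} := by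
    rw [Metric.isCompact_iff_isClosed_bounded]
    exact ⟨isClosed_le hcont continuous_const, hlevel _⟩
  obtain ⟨z, hzK, hz⟩ := hK.exists_isMinOn ⟨0, by simp⟩ hcont.continuousOn
  refine ⟨z, fun y => ?_⟩
  by_cases hy : f y ≤ f 0
  · exact hz hy
  · exact le_trans (hz (by simp : (0:E) ∈ _)) (le_of_not_ge hy)

end

open Filter Topology

/-- **Proposition 2.1.** For a convex, differentiable `f` with Lipschitz-continuous gradient
and bounded level sets, a monotone sequence `x k` with subspaces `S k` satisfies
`f (x k) → inf f` iff `dist (∇f (x k), S k) → 0` and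
`f (x (k+1)) - inf {f y : y ∈ x k + S k} → 0`. -/
theorem optimist_convergence_characterization {n : ℕ}
    (f : EuclideanSpace ℝ (Fin n) → ℝ)
    (hconv : ConvexOn ℝ Set.univ f)
    (hdiff : Differentiable ℝ f)
    (L : ℝ) (hL : 0 < L)
    (hlip : ∀ y z, ‖gradient f y - gradient f z‖ ≤ L * ‖y - z‖)
    (hlevel : ∀ c : ℝ, Bornology.IsBounded {y | f y ≤ c})
    (x : ℕ → EuclideanSpace ℝ (Fin n))
    (hmono : ∀ k, f (x (k + 1)) ≤ f (x k))
    (S : ℕ → Submodule ℝ (EuclideanSpace ℝ (Fin n))) :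
    Tendsto (fun k => f (x k)) atTop (𝓝 (⨅ y, f y)) ↔
      (Tendsto (fun k => Metric.infDist (gradient f (x k)) (S k : Set (EuclideanSpace ℝ (Fin n))))
          atTop (𝓝 0) ∧
        Tendsto (fun k => f (x (k + 1)) - sInf (f '' {y | ∃ s ∈ S k, y = x k + s}))
          atTop (𝓝 0)) := by
  classical
  obtain ⟨z, hz⟩ := my_minimizer f hdiff hlevel
  have hBdd : BddBelow (Set.range f) := ⟨f z, by rintro _ ⟨y, rfl⟩; exact hz y⟩
  have hinf : (⨅ y, f y) = f z := le_antisymm (ciInf_le hBdd z) (le_ciInf hz)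
  have hTne : ∀ k, (f '' {y | ∃ s ∈ S k, y = x k + s}).Nonempty :=
    fun k => ⟨f (x k), x k, ⟨0, (S k).zero_mem, by simp⟩, rfl⟩
  have hTbdd : ∀ k, BddBelow (f '' {y | ∃ s ∈ S k, y = x k + s}) :=
    fun k => ⟨f z, by rintro _ ⟨y, _, rfl⟩; exact hz y⟩
  have hm_le : ∀ k s, s ∈ S k → sInf (f '' {y | ∃ s ∈ S k, y = x k + s}) ≤ f (x k + s) :=
    fun k s hs => csInf_le (hTbdd k) ⟨x k + s, ⟨s, hs, rfl⟩, rfl⟩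
  have hm_ge : ∀ k, f z ≤ sInf (f '' {y | ∃ s ∈ S k, y = x k + s}) :=
    fun k => le_csInf (hTne k) (by rintro _ ⟨y, _, rfl⟩; exact hz y)
  have hm_lek : ∀ k, sInf (f '' {y | ∃ s ∈ S k, y = x k + s}) ≤ f (x k) := by
    intro k
    have := hm_le k 0 (S k).zero_mem
    simpa using this
  have hanti : Antitone (fun k => f (x k)) := antitone_nat_of_succ_le hmono
  rw [hinf]
  constructor
  · intro hf
    have hfl : Tendsto (fun k => f (x (k + 1))) atTop (𝓝 (f z)) :=
      hf.comp (tendsto_add_atTop_nat 1)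
    constructor
    · -- infDist → 0
      have hgb : ∀ k, ‖gradient f (x k)‖ ^ 2 ≤ 4 * L * (f (x k) - f z) := by
        intro k
        set gk := gradient f (x k) with hgk
        have hd := my_descent f hdiff L hL hlip (x k) ((-(1 / (2 * L))) • gk)
        have hz' := hz (x k + (-(1 / (2 * L))) • gk)
        have hi : (inner ℝ gk ((-(1 / (2 * L))) • gk) : ℝ) = -(1 / (2 * L)) * ‖gk‖ ^ 2 := by
          rw [real_inner_smul_right, real_inner_self_eq_norm_sq]
        have hn : ‖(-(1 / (2 * L))) • gk‖ ^ 2 = (1 / (2 * L)) ^ 2 * ‖gk‖ ^ 2 := by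
          rw [norm_smul]
          rw [mul_pow, Real.norm_eq_abs, sq_abs]
          ring_nf
        rw [hi, hn] at hd
        have hL2 : (0 : ℝ) < 2 * L := by linarith
        have e1 : L * ((1 / (2 * L)) ^ 2 * ‖gk‖ ^ 2) = ‖gk‖ ^ 2 / (4 * L) := by
          field_simp; ring
        have e2 : -(1 / (2 * L)) * ‖gk‖ ^ 2 = -(‖gk‖ ^ 2 / (2 * L)) := by
          field_simp
        rw [e1, e2] at hd
        have h4 : ‖gk‖ ^ 2 / (2 * L) - ‖gk‖ ^ 2 / (4 * L) = ‖gk‖ ^ 2 / (4 * L) := by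
          field_simp; ring
        have h5 : f z ≤ f (x k) - ‖gk‖ ^ 2 / (4 * L) := by linarith
        have h6 : ‖gk‖ ^ 2 / (4 * L) ≤ f (x k) - f z := by linarith
        calc ‖gk‖ ^ 2 = ‖gk‖ ^ 2 / (4 * L) * (4 * L) := by field_simp
          _ ≤ (f (x k) - f z) * (4 * L) := by
              apply mul_le_mul_of_nonneg_right h6; linarith
          _ = 4 * L * (f (x k) - f z) := by ring
      have hub : ∀ k, Metric.infDist (gradient f (x k)) (S k : Set (EuclideanSpace ℝ (Fin n)))
          ≤ Real.sqrt (4 * L * (f (x k) - f z)) := by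
        intro k
        have h0 : Metric.infDist (gradient f (x k)) (S k : Set (EuclideanSpace ℝ (Fin n)))
            ≤ dist (gradient f (x k)) 0 :=
          Metric.infDist_le_dist_of_mem (by simp)
        rw [dist_zero_right] at h0
        refine h0.trans ?_
        rw [show ‖gradient f (x k)‖ = Real.sqrt (‖gradient f (x k)‖ ^ 2) by
          rw [Real.sqrt_sq (norm_nonneg _)]]
        exact Real.sqrt_le_sqrt (hgb k)
      have hs0 : Tendsto (fun k => Real.sqrt (4 * L * (f (x k) - f z))) atTop (𝓝 0) := by
        have h1 : Tendsto (fun k => 4 * L * (f (x k) - f z)) atTop (𝓝 0) := by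
          have := (hf.sub (tendsto_const_nhds (x := f z))).const_mul (4 * L)
          simpa using this
        have := (Real.continuous_sqrt.tendsto 0).comp h1
        simpa [Function.comp_def] using this
      exact squeeze_zero (fun k => Metric.infDist_nonneg) hub hs0
    · -- f(x(k+1)) - m k → 0
      have hlow : Tendsto (fun k => f (x (k + 1)) - f (x k)) atTop (𝓝 0) := by
        have := hfl.sub hf
        simpa using this
      have hup : Tendsto (fun k => f (x (k + 1)) - f z) atTop (𝓝 0) := by
        have := hfl.sub (tendsto_const_nhds (x := f z))
        simpa using this
      refine tendsto_of_tendsto_of_tendsto_of_le_of_le hlow hup ?_ ?_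
      · intro k; exact sub_le_sub_left (hm_lek k) _
      · intro k; exact sub_le_sub_left (hm_ge k) _
  · rintro ⟨h1, h2⟩
    have hbdd_below : BddBelow (Set.range fun k => f (x k)) :=
      ⟨f z, by rintro _ ⟨k, rfl⟩; exact hz _⟩
    have hfl : Tendsto (fun k => f (x k)) atTop (𝓝 (⨅ k, f (x k))) :=
      tendsto_atTop_ciInf hanti hbdd_below
    set l := ⨅ k, f (x k) with hl
    have hge : f z ≤ l := le_ciInf fun k => hz _
    suffices hle : l ≤ f z by rwa [le_antisymm hle hge] at hfl
    by_contra hcon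
    push_neg at hcon
    have hδ : 0 < l - f z := by linarith
    set δ := l - f z with hδdef
    -- boundedness
    obtain ⟨R, hR⟩ := isBounded_iff_forall_norm_le.mp (hlevel (f (x 0)))
    have hR0 : (0 : ℝ) ≤ R := le_trans (norm_nonneg _) (hR (x 0) (by simp))
    set D := R + ‖z‖ + 1 with hD
    have hD0 : (0 : ℝ) < D := by positivity
    have hxk : ∀ k, ‖x k - z‖ ≤ D := by
      intro k
      calc ‖x k - z‖ ≤ ‖x k‖ + ‖z‖ := norm_sub_le _ _
        _ ≤ R + ‖z‖ := by
            have : f (x k) ≤ f (x 0) := hanti (Nat.zero_le k)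
            exact add_le_add_left (hR (x k) this) _
        _ ≤ D := by rw [hD]; linarith
    -- projections
    set p : ℕ → EuclideanSpace ℝ (Fin n) :=
      fun k => (Submodule.orthogonalProjection (S k) (gradient f (x k)) : EuclideanSpace ℝ (Fin n)) with hp
    set q : ℕ → EuclideanSpace ℝ (Fin n) := fun k => gradient f (x k) - p k with hqdef
    have hpmem : ∀ k, p k ∈ S k := fun k => (Submodule.orthogonalProjection (S k) (gradient f (x k))).2
    have hq_le : ∀ k, ‖q k‖ ≤ Metric.infDist (gradient f (x k))
        (S k : Set (EuclideanSpace ℝ (Fin n))) := by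
      intro k
      rw [Metric.infDist_eq_iInf]
      apply le_ciInf
      intro w
      rw [dist_eq_norm]
      have hmin := Submodule.starProjection_minimal (U := S k) (gradient f (x k))
      rw [show ‖q k‖ = ‖gradient f (x k) - (S k).starProjection (gradient f (x k))‖ from rfl, hmin]
      exact ciInf_le ⟨0, by rintro _ ⟨y, rfl⟩; exact norm_nonneg _⟩ w
    have hq0 : Tendsto (fun k => ‖q k‖) atTop (𝓝 0) :=
      squeeze_zero (fun k => norm_nonneg _) hq_le h1
    have hip : ∀ k, (inner ℝ (gradient f (x k)) (p k) : ℝ) = ‖p k‖ ^ 2 := by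
      intro k
      have horth : (inner ℝ (gradient f (x k) - p k) (p k) : ℝ) = 0 :=
        Submodule.starProjection_inner_eq_zero (gradient f (x k)) (p k) (hpmem k)
      have hself : (inner ℝ (p k) (p k) : ℝ) = ‖p k‖ ^ 2 := real_inner_self_eq_norm_sq _
      rw [inner_sub_left] at horth
      linarith
    -- descent bound on m k
    have hmk : ∀ k, sInf (f '' {y | ∃ s ∈ S k, y = x k + s}) ≤ f (x k) - ‖p k‖ ^ 2 / (4 * L) := by
      intro k
      have hv : (-(1 / (2 * L))) • p k ∈ S k := (S k).smul_mem _ (hpmem k)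
      have hle := hm_le k _ hv
      have hd := my_descent f hdiff L hL hlip (x k) ((-(1 / (2 * L))) • p k)
      have hi : (inner ℝ (gradient f (x k)) ((-(1 / (2 * L))) • p k) : ℝ)
          = -(1 / (2 * L)) * ‖p k‖ ^ 2 := by
        rw [real_inner_smul_right, hip k]
      have hn : ‖(-(1 / (2 * L))) • p k‖ ^ 2 = (1 / (2 * L)) ^ 2 * ‖p k‖ ^ 2 := by
        rw [norm_smul, mul_pow, Real.norm_eq_abs, sq_abs]
        ring_nf
      rw [hi, hn] at hd
      have e1 : L * ((1 / (2 * L)) ^ 2 * ‖p k‖ ^ 2) = ‖p k‖ ^ 2 / (4 * L) := by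
        field_simp; ring
      have e2 : -(1 / (2 * L)) * ‖p k‖ ^ 2 = -(‖p k‖ ^ 2 / (2 * L)) := by field_simp
      rw [e1, e2] at hd
      have h4 : ‖p k‖ ^ 2 / (2 * L) - ‖p k‖ ^ 2 / (4 * L) = ‖p k‖ ^ 2 / (4 * L) := by
        field_simp; ring
      linarith
    -- convexity bound
    have hkey : ∀ k, δ ≤ (inner ℝ (gradient f (x k)) (x k - z) : ℝ) := by
      intro k
      have hfo := my_first_order f hconv hdiff (x k) z
      have hk : l ≤ f (x k) := ciInf_le hbdd_below k
      have hneg : (inner ℝ (gradient f (x k)) (x k - z) : ℝ)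
          = -(inner ℝ (gradient f (x k)) (z - x k) : ℝ) := by
        rw [← inner_neg_right, neg_sub]
      rw [hneg]
      linarith
    have hsplit : ∀ k, δ ≤ ‖p k‖ * D + ‖q k‖ * D := by
      intro k
      have h1' := hkey k
      have hgpq : gradient f (x k) = p k + q k := by simp [hqdef]
      rw [hgpq, inner_add_left] at h1'
      have hbp : (inner ℝ (p k) (x k - z) : ℝ) ≤ ‖p k‖ * D := by
        calc (inner ℝ (p k) (x k - z) : ℝ) ≤ ‖p k‖ * ‖x k - z‖ := real_inner_le_norm _ _
          _ ≤ ‖p k‖ * D := mul_le_mul_of_nonneg_left (hxk k) (norm_nonneg _)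
      have hbq : (inner ℝ (q k) (x k - z) : ℝ) ≤ ‖q k‖ * D := by
        calc (inner ℝ (q k) (x k - z) : ℝ) ≤ ‖q k‖ * ‖x k - z‖ := real_inner_le_norm _ _
          _ ≤ ‖q k‖ * D := mul_le_mul_of_nonneg_left (hxk k) (norm_nonneg _)
      linarith
    -- final contradiction
    set c := (δ / (2 * D)) ^ 2 / (4 * L) with hc
    have hc0 : 0 < c := by positivity
    have ha : Tendsto (fun k => (f (x (k + 1)) - sInf (f '' {y | ∃ s ∈ S k, y = x k + s}))
        - (f (x (k + 1)) - f (x k))) atTop (𝓝 0) := by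
      have hs := hfl.comp (tendsto_add_atTop_nat 1)
      have := h2.sub (hs.sub hfl)
      simpa using this
    have hev : ∀ᶠ k in atTop, c ≤ (f (x (k + 1)) - sInf (f '' {y | ∃ s ∈ S k, y = x k + s}))
        - (f (x (k + 1)) - f (x k)) := by
      have hqev : ∀ᶠ k in atTop, ‖q k‖ < δ / (2 * D) := by
        apply hq0.eventually_lt_const
        positivity
      filter_upwards [hqev] with k hk
      have hs := hsplit k
      have hqD : ‖q k‖ * D ≤ δ / 2 := by
        have : ‖q k‖ * D ≤ (δ / (2 * D)) * D := mul_le_mul_of_nonneg_right hk.le hD0.le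
        calc ‖q k‖ * D ≤ (δ / (2 * D)) * D := this
          _ = δ / 2 := by field_simp
      have hpD : δ / 2 ≤ ‖p k‖ * D := by nlinarith [hs, hqD]
      have hpk : δ / (2 * D) ≤ ‖p k‖ := by
        rw [div_le_iff₀ (by positivity)]
        calc δ = (δ / 2) * 2 := by ring
          _ ≤ (‖p k‖ * D) * 2 := by linarith
          _ = ‖p k‖ * (2 * D) := by ring
      have hpsq : (δ / (2 * D)) ^ 2 ≤ ‖p k‖ ^ 2 := by
        apply pow_le_pow_left₀ (by positivity) hpk
      have hdiv : c ≤ ‖p k‖ ^ 2 / (4 * L) := by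
        rw [hc]
        exact div_le_div_of_nonneg_right hpsq (by positivity)
      have := hmk k
      linarith
    have hfin : c ≤ (0 : ℝ) := ge_of_tendsto ha hev
    linarith
end

section
/- Let f : ℝⁿ → ℝ be differentiable with ∇f Lipschitz continuous on ℝⁿ with constant L ∈ (0,∞) and f bounded below. Let {x_k} ⊂ ℝⁿ be a sequence with f(x_{k+1}) ≤ f(x_k) for every k ≥ 0, let g_k = ∇f(x_k), and let {S_k} be a sequence of linear subspaces of ℝⁿ. If dist(g_k, S_k) → 0 and f(x_{k+1}) − inf{f(x) : x ∈ x_k + S_k} → 0 as k → ∞, then ‖g_k‖ → 0 as k → ∞. -/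
open Filter Topology

open scoped RealInnerProductSpace

private lemma descent_lemma {n : ℕ} (f : EuclideanSpace ℝ (Fin n) → ℝ)
    (hdiff : Differentiable ℝ f) (L : ℝ) (hL : 0 < L)
    (hlip : ∀ y z, ‖gradient f y - gradient f z‖ ≤ L * ‖y - z‖)
    (x v : EuclideanSpace ℝ (Fin n)) :
    f (x + v) ≤ f x + ⟪gradient f x, v⟫ + L / 2 * ‖v‖ ^ 2 := by
  set g := gradient f x with hg
  set ψ : ℝ → ℝ := fun t => f (x + t • v) - t * ⟪g, v⟫ - L * ‖v‖ ^ 2 / 2 * t ^ 2 with hψ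
  have hφ : ∀ t : ℝ, HasDerivAt (fun t : ℝ => f (x + t • v)) ⟪gradient f (x + t • v), v⟫ t := by
    intro t
    have hc : HasDerivAt (fun t : ℝ => x + t • v) v t := by
      simpa using ((hasDerivAt_id t).smul_const v).const_add x
    have hf := ((hdiff (x + t • v)).hasGradientAt).hasFDerivAt
    have := hf.comp_hasDerivAt t hc
    simpa [InnerProductSpace.toDual_apply_apply, Function.comp_def] using this
  have hψ' : ∀ t : ℝ, HasDerivAt ψ
      (⟪gradient f (x + t • v), v⟫ - ⟪g, v⟫ - L * ‖v‖ ^ 2 / 2 * (2 * t)) t := by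
    intro t
    have h2 : HasDerivAt (fun t : ℝ => t * ⟪g, v⟫) ⟪g, v⟫ t := by
      simpa using (hasDerivAt_id t).mul_const ⟪g, v⟫
    have h3 : HasDerivAt (fun t : ℝ => L * ‖v‖ ^ 2 / 2 * t ^ 2)
        (L * ‖v‖ ^ 2 / 2 * (2 * t)) t := by
      simpa using (hasDerivAt_pow 2 t).const_mul (L * ‖v‖ ^ 2 / 2)
    exact ((hφ t).sub h2).sub h3
  have hanti : AntitoneOn ψ (Set.Icc 0 1) := by
    apply antitoneOn_of_deriv_nonpos (convex_Icc 0 1)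
    · exact Continuous.continuousOn
        (continuous_iff_continuousAt.2 fun t => (hψ' t).differentiableAt.continuousAt)
    · intro t _
      exact (hψ' t).differentiableAt.differentiableWithinAt
    · intro t ht
      rw [interior_Icc] at ht
      rw [(hψ' t).deriv]
      have hineq : ⟪gradient f (x + t • v) - g, v⟫ ≤ L * t * ‖v‖ ^ 2 := by
        calc ⟪gradient f (x + t • v) - g, v⟫ ≤ ‖gradient f (x + t • v) - g‖ * ‖v‖ :=
              real_inner_le_norm _ _
          _ ≤ L * ‖(x + t • v) - x‖ * ‖v‖ := by
              have := hlip (x + t • v) x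
              exact mul_le_mul_of_nonneg_right this (norm_nonneg v)
          _ = L * t * ‖v‖ ^ 2 := by
              rw [add_sub_cancel_left, norm_smul]
              simp [Real.norm_eq_abs, abs_of_pos ht.1]
              ring
      have : ⟪gradient f (x + t • v), v⟫ - ⟪g, v⟫ = ⟪gradient f (x + t • v) - g, v⟫ := by
        rw [inner_sub_left]
      rw [this]
      nlinarith [hineq]
  have h01 : ψ 1 ≤ ψ 0 := hanti (by norm_num) (by norm_num) (by norm_num)
  simp only [hψ, one_smul, zero_smul, add_zero, one_mul, one_pow, zero_mul, mul_zero,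
    zero_pow, sub_zero] at h01
  nlinarith [h01]

/-- The "if" direction of Proposition 2.1 without convexity: if `dist (∇f (x k), S k) → 0` and
`f (x (k+1)) - inf {f y : y ∈ x k + S k} → 0`, then `‖∇f (x k)‖ → 0`. -/
theorem optimist_gradient_tendsto_zero {n : ℕ}
    (f : EuclideanSpace ℝ (Fin n) → ℝ)
    (hdiff : Differentiable ℝ f)
    (L : ℝ) (hL : 0 < L)
    (hlip : ∀ y z, ‖gradient f y - gradient f z‖ ≤ L * ‖y - z‖)
    (hbdd : BddBelow (Set.range f))
    (x : ℕ → EuclideanSpace ℝ (Fin n))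
    (hmono : ∀ k, f (x (k + 1)) ≤ f (x k))
    (S : ℕ → Submodule ℝ (EuclideanSpace ℝ (Fin n)))
    (hdist : Tendsto (fun k => Metric.infDist (gradient f (x k))
        (S k : Set (EuclideanSpace ℝ (Fin n)))) atTop (𝓝 0))
    (hsub : Tendsto (fun k => f (x (k + 1)) - sInf (f '' {y | ∃ s ∈ S k, y = x k + s}))
        atTop (𝓝 0)) :
    Tendsto (fun k => ‖gradient f (x k)‖) atTop (𝓝 0) := by
  set g : ℕ → EuclideanSpace ℝ (Fin n) := fun k => gradient f (x k) with hgdef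
  -- projection of g k onto S k
  set s : ℕ → EuclideanSpace ℝ (Fin n) := fun k => ((S k).orthogonalProjectionOnto (g k) : _) with hsdef
  set d : ℕ → ℝ := fun k => Metric.infDist (g k) (S k : Set (EuclideanSpace ℝ (Fin n))) with hddef
  set I : ℕ → ℝ := fun k => sInf (f '' {y | ∃ t ∈ S k, y = x k + t}) with hIdef
  -- basic facts about the projection
  have hsmem : ∀ k, s k ∈ S k := fun k => ((S k).orthogonalProjectionOnto (g k)).2
  have hinner : ∀ k, ⟪g k, s k⟫ = ‖s k‖ ^ 2 := by
    intro k
    have horth : ⟪s k, g k - s k⟫ = 0 :=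
      (Submodule.sub_starProjection_mem_orthogonal (K := S k) (g k)) (s k) (hsmem k)
    have h0 : ⟪s k, g k⟫ - ⟪s k, s k⟫ = 0 := by rw [← inner_sub_right]; exact horth
    rw [← real_inner_self_eq_norm_sq, real_inner_comm]
    linarith
  have hprojdist : ∀ k, ‖g k - s k‖ ≤ d k := by
    intro k
    have hne : (S k : Set (EuclideanSpace ℝ (Fin n))).Nonempty := ⟨0, (S k).zero_mem⟩
    rw [hddef]
    simp only [Metric.infDist_eq_iInf]
    refine le_ciInf fun w => ?_
    rw [dist_eq_norm]
    calc ‖g k - s k‖ = ⨅ v : S k, ‖g k - v‖ := Submodule.starProjection_minimal (g k)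
      _ ≤ ‖g k - w‖ := by
          refine ciInf_le ⟨0, ?_⟩ w
          rintro _ ⟨v, rfl⟩; exact norm_nonneg _
  -- key inequality: ‖s k‖² ≤ 2 L (f (x k) - I k)
  have hkey : ∀ k, ‖s k‖ ^ 2 ≤ 2 * L * (f (x k) - I k) := by
    intro k
    have hdesc := descent_lemma f hdiff L hL hlip (x k) (-(1 / L) • s k)
    have h1 : ⟪g k, -(1 / L) • s k⟫ = -(1 / L) * ‖s k‖ ^ 2 := by
      rw [real_inner_smul_right, hinner k]
    have h2 : ‖-(1 / L) • s k‖ ^ 2 = (1 / L) ^ 2 * ‖s k‖ ^ 2 := by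
      rw [norm_smul]
      simp [abs_of_pos (one_div_pos.2 hL), mul_pow]
    rw [h1, h2] at hdesc
    have hImem : I k ≤ f (x k + -(1 / L) • s k) := by
      refine csInf_le ?_ ?_
      · exact hbdd.mono (Set.image_subset_range f _)
      · exact ⟨x k + -(1 / L) • s k, ⟨-(1 / L) • s k, (S k).smul_mem _ (hsmem k), rfl⟩, rfl⟩
    have hL' : (0:ℝ) < 1 / L := one_div_pos.2 hL
    have : I k ≤ f (x k) - 1 / (2 * L) * ‖s k‖ ^ 2 := by
      calc I k ≤ f (x k) + -(1 / L) * ‖s k‖ ^ 2 + L / 2 * ((1 / L) ^ 2 * ‖s k‖ ^ 2) :=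
            le_trans hImem hdesc
        _ = f (x k) - 1 / (2 * L) * ‖s k‖ ^ 2 := by field_simp; ring
    have h2L : (0:ℝ) < 2 * L := by linarith
    have h3 : 1 / (2 * L) * ‖s k‖ ^ 2 ≤ f (x k) - I k := by linarith
    calc ‖s k‖ ^ 2 = 2 * L * (1 / (2 * L) * ‖s k‖ ^ 2) := by field_simp
      _ ≤ 2 * L * (f (x k) - I k) := by
          exact mul_le_mul_of_nonneg_left h3 (le_of_lt h2L)
  -- f (x k) converges, so f (x k) - f (x (k+1)) → 0
  have hanti : Antitone (fun k => f (x k)) := antitone_nat_of_succ_le hmono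
  have hbdd' : BddBelow (Set.range fun k => f (x k)) :=
    hbdd.mono (Set.range_comp_subset_range x f)
  have hconv : Tendsto (fun k => f (x k)) atTop (𝓝 (⨅ k, f (x k))) :=
    tendsto_atTop_ciInf hanti hbdd'
  have hdiff0 : Tendsto (fun k => f (x k) - f (x (k + 1))) atTop (𝓝 0) := by
    have := hconv.sub (hconv.comp (tendsto_add_atTop_nat 1))
    simpa using this
  -- f (x k) - I k → 0
  have ha : Tendsto (fun k => f (x k) - I k) atTop (𝓝 0) := by
    have h := hdiff0.add hsub
    rw [add_zero] at h
    refine h.congr fun k => ?_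
    simp only [hIdef]
    ring
  -- ‖s k‖ → 0
  have hs0 : Tendsto (fun k => ‖s k‖) atTop (𝓝 0) := by
    have hb : Tendsto (fun k => Real.sqrt (2 * L * (f (x k) - I k))) atTop (𝓝 0) := by
      have h1 : Tendsto (fun k => 2 * L * (f (x k) - I k)) atTop (𝓝 0) := by
        simpa using ha.const_mul (2 * L)
      have := (Real.continuous_sqrt.tendsto 0).comp h1
      simpa [Function.comp_def] using this
    refine squeeze_zero (fun k => norm_nonneg _) (fun k => ?_) hb
    have := Real.sqrt_le_sqrt (hkey k)
    rwa [Real.sqrt_sq (norm_nonneg _)] at this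
  -- conclude
  have hd0 : Tendsto (fun k => ‖s k‖ + d k) atTop (𝓝 0) := by
    simpa using hs0.add hdist
  refine squeeze_zero (fun k => norm_nonneg _) (fun k => ?_) hd0
  calc ‖g k‖ = ‖s k + (g k - s k)‖ := by rw [add_sub_cancel]
    _ ≤ ‖s k‖ + ‖g k - s k‖ := norm_add_le _ _
    _ ≤ ‖s k‖ + d k := by linarith [hprojdist k]
end

section
/- Let f : ℝⁿ → ℝ be convex and differentiable, and suppose the level set {x ∈ ℝⁿ : f(x) ≤ f(x₀)} is bounded, where x₀ ∈ ℝⁿ. Let f_* = inf{f(x) : x ∈ ℝⁿ}. Let {x_k} ⊂ ℝⁿ be a sequence starting at x₀ with f(x_{k+1}) ≤ f(x_k) for every k ≥ 0 and ‖∇f(x_k)‖ → 0 as k → ∞. Then f(x_k) → f_* as k → ∞. -/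
open Filter Topology

lemma grad_ineq_aux {E : Type*} [NormedAddCommGroup E] [InnerProductSpace ℝ E]
    [CompleteSpace E] {f : E → ℝ} (hconv : ConvexOn ℝ Set.univ f)
    (hdiff : Differentiable ℝ f) (a z : E) :
    f a + inner ℝ (gradient f a) (z - a) ≤ f z := by
  set g : ℝ → ℝ := fun t => f (a + t • (z - a)) with hg
  have hcurve : ∀ t : ℝ, HasDerivAt (fun t : ℝ => a + t • (z - a)) (z - a) t := by
    intro t
    simpa using ((hasDerivAt_id t).smul_const (z - a)).const_add a
  have hgd : HasDerivAt g (inner ℝ (gradient f a) (z - a)) 0 := by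
    have h1 : HasFDerivAt f (InnerProductSpace.toDual ℝ E (gradient f a)) (a + (0:ℝ) • (z - a)) := by
      simpa using (hdiff a).hasFDerivAt
    have := h1.comp_hasDerivAt 0 (hcurve 0)
    simp at this
    rw [show inner ℝ (gradient f a) (z - a) = (fderiv ℝ f a) z - (fderiv ℝ f a) a by simp [gradient, map_sub]]
    exact this
  have hgconv : ConvexOn ℝ Set.univ g := by
    have := hconv.comp_affineMap (AffineMap.lineMap a z : ℝ →ᵃ[ℝ] E)
    have heq : (f ∘ (AffineMap.lineMap a z : ℝ →ᵃ[ℝ] E)) = g := by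
      funext t
      simp [g, AffineMap.lineMap_apply, add_comm, sub_smul]
    rw [heq] at this
    simpa using this
  have := hgconv.le_slope_of_hasDerivAt (Set.mem_univ (0:ℝ)) (Set.mem_univ (1:ℝ))
    one_pos hgd
  rw [slope_def_field] at this
  simp only [g] at this
  simp at this
  have hk : inner ℝ (gradient f a) (z - a) = (fderiv ℝ f a) z - (fderiv ℝ f a) a := by
    simp [gradient, map_sub]
  linarith [this]

/-- For a convex differentiable `f` whose level set through the starting point is bounded,
a monotone sequence with vanishing gradients minimizes `f`. -/
theorem convex_vanishing_gradient_minimizes {n : ℕ}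
    (f : EuclideanSpace ℝ (Fin n) → ℝ)
    (hconv : ConvexOn ℝ Set.univ f)
    (hdiff : Differentiable ℝ f)
    (x₀ : EuclideanSpace ℝ (Fin n))
    (hlevel : Bornology.IsBounded {y | f y ≤ f x₀})
    (x : ℕ → EuclideanSpace ℝ (Fin n))
    (hx0 : x 0 = x₀)
    (hmono : ∀ k, f (x (k + 1)) ≤ f (x k))
    (hgrad : Tendsto (fun k => ‖gradient f (x k)‖) atTop (𝓝 0)) :
    Tendsto (fun k => f (x k)) atTop (𝓝 (⨅ y, f y)) := by
  have hcont : Continuous f := hdiff.continuous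
  set L : Set (EuclideanSpace ℝ (Fin n)) := {y | f y ≤ f x₀} with hL
  have hLclosed : IsClosed L := isClosed_le hcont continuous_const
  have hLcompact : IsCompact L := Metric.isCompact_of_isClosed_isBounded hLclosed hlevel
  have hx₀L : x₀ ∈ L := by simp [hL]
  obtain ⟨z, hzL, hzmin⟩ := hLcompact.exists_isMinOn ⟨x₀, hx₀L⟩ hcont.continuousOn
  -- z is a global minimizer
  have hzglobal : ∀ y, f z ≤ f y := by
    intro y
    by_cases hy : y ∈ L
    · exact hzmin hy
    · exact le_trans (hzmin hx₀L) (le_of_lt (not_le.mp hy))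
  have hinf : (⨅ y, f y) = f z :=
    le_antisymm (ciInf_le ⟨f z, fun v ⟨y, hy⟩ => hy ▸ hzglobal y⟩ z) (le_ciInf hzglobal)
  -- all iterates lie in L
  have hxL : ∀ k, x k ∈ L := by
    intro k
    induction k with
    | zero => rw [hx0]; exact hx₀L
    | succ k ih => exact le_trans (hmono k) ih
  -- distance bound
  obtain ⟨C, hC⟩ := Metric.isBounded_iff.mp hlevel
  have hupper : ∀ k, f (x k) ≤ f z + ‖gradient f (x k)‖ * C := by
    intro k
    have h1 := grad_ineq_aux hconv hdiff (x k) z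
    have h2 : -(‖gradient f (x k)‖ * ‖z - x k‖) ≤ inner ℝ (gradient f (x k)) (z - x k) :=
      neg_le_of_neg_le (by
        have := abs_real_inner_le_norm (gradient f (x k)) (z - x k)
        cases' abs_le.mp this with ha hb
        linarith)
    have h3 : ‖z - x k‖ ≤ C := by
      have := hC hzL (hxL k)
      rwa [dist_eq_norm] at this
    have h4 : ‖gradient f (x k)‖ * ‖z - x k‖ ≤ ‖gradient f (x k)‖ * C :=
      mul_le_mul_of_nonneg_left h3 (norm_nonneg _)
    nlinarith
  rw [hinf]
  have hlim : Tendsto (fun k => f z + ‖gradient f (x k)‖ * C) atTop (𝓝 (f z)) := by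
    have : Tendsto (fun k => ‖gradient f (x k)‖ * C) atTop (𝓝 0) := by
      simpa using hgrad.mul_const C
    simpa using (tendsto_const_nhds.add this)
  exact tendsto_of_tendsto_of_tendsto_of_le_of_le tendsto_const_nhds hlim
    (fun k => hzglobal (x k)) hupper
end

section
/- Let f : ℝⁿ → ℝ be differentiable with ∇f Lipschitz continuous on ℝⁿ with constant L ∈ (0,∞). Let η > 0 and ζ > 0, and set μ = 2/(L + 2η + 4ζ). Let x ∈ ℝⁿ, g = ∇f(x), and let ĝ ∈ ℝⁿ and δ > 0 satisfy ‖ĝ − g‖ ≤ ζδ and δ ≤ μ‖g‖. Then ĝ ≠ 0, ‖ĝ‖ ≥ ηδ, and f(x − δ ĝ/‖ĝ‖) ≤ f(x) − η δ². -/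
open Filter Topology

set_option maxHeartbeats 1000000 in
/-- Implication (3.4): if `δ ≤ μ ‖∇f x‖` with `μ = 2/(L + 2η + 4ζ)` and the approximate gradient
`ghat` satisfies `‖ghat - ∇f x‖ ≤ ζ δ`, then `ghat ≠ 0`, `‖ghat‖ ≥ η δ`, and the normalized step
of length `δ` along `-ghat` decreases `f` by at least `η δ²`. -/
theorem approx_gradient_step_decrease {n : ℕ}
    (f : EuclideanSpace ℝ (Fin n) → ℝ)
    (hdiff : Differentiable ℝ f)
    (L : ℝ) (hL : 0 < L)
    (hlip : ∀ y z, ‖gradient f y - gradient f z‖ ≤ L * ‖y - z‖)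
    (η ζ : ℝ) (hη : 0 < η) (hζ : 0 < ζ)
    (μ : ℝ) (hμ : μ = 2 / (L + 2 * η + 4 * ζ))
    (x ghat : EuclideanSpace ℝ (Fin n)) (δ : ℝ) (hδ : 0 < δ)
    (hacc : ‖ghat - gradient f x‖ ≤ ζ * δ)
    (hsmall : δ ≤ μ * ‖gradient f x‖) :
    ghat ≠ 0 ∧ η * δ ≤ ‖ghat‖ ∧ f (x - (δ / ‖ghat‖) • ghat) ≤ f x - η * δ ^ 2 := by
  set g := gradient f x with hgdef
  have hD : 0 < L + 2 * η + 4 * ζ := by positivity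
  -- lower bound on ‖g‖
  have hgnorm : δ * (L + 2 * η + 4 * ζ) ≤ 2 * ‖g‖ := by
    rw [hμ, div_mul_eq_mul_div, le_div_iff₀ hD] at hsmall
    linarith [hsmall]
  have hgg : ‖g‖ - ‖ghat‖ ≤ ζ * δ := by
    calc ‖g‖ - ‖ghat‖ ≤ ‖g - ghat‖ := norm_sub_norm_le g ghat
      _ = ‖ghat - g‖ := (norm_sub_rev _ _)
      _ ≤ ζ * δ := hacc
  have hghat : (L / 2 + η + ζ) * δ ≤ ‖ghat‖ := by nlinarith
  have hηδ : η * δ ≤ ‖ghat‖ := by nlinarith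
  have hghat0 : ghat ≠ 0 := by
    intro h
    rw [h, norm_zero] at hηδ
    nlinarith
  refine ⟨hghat0, hηδ, ?_⟩
  have hgh_pos : 0 < ‖ghat‖ := norm_pos_iff.mpr hghat0
  set c : ℝ := δ / ‖ghat‖ with hcdef
  have hc : 0 ≤ c := by positivity
  set v : EuclideanSpace ℝ (Fin n) := c • ghat with hvdef
  have hvnorm : ‖v‖ = δ := by
    rw [hvdef, norm_smul, Real.norm_eq_abs, abs_of_nonneg hc, hcdef,
      div_mul_cancel₀ _ (ne_of_gt hgh_pos)]
  clear_value c v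
  -- derivative of t ↦ f (x - t • v)
  have hφ : ∀ t : ℝ, HasDerivAt (fun t : ℝ => f (x - t • v))
      ((inner ℝ (gradient f (x - t • v)) (-v) : ℝ)) t := by
    intro t
    have hcurve : HasDerivAt (fun t : ℝ => x - t • v) (-v) t := by
      have h1 : HasDerivAt (fun t : ℝ => t • v) ((1:ℝ) • v) t :=
        (hasDerivAt_id t).smul_const v
      simpa using h1.const_sub x
    have hf : HasFDerivAt f (InnerProductSpace.toDual ℝ _ (gradient f (x - t • v)))
        (x - t • v) := (hdiff _).hasGradientAt
    have := hf.comp_hasDerivAt t hcurve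
    exact this
  -- gradient is continuous
  have hgradcont : Continuous (gradient f) := by
    apply (LipschitzWith.of_dist_le_mul (K := L.toNNReal) ?_).continuous
    intro a b
    rw [dist_eq_norm, dist_eq_norm, Real.coe_toNNReal _ hL.le]
    exact hlip a b
  have hcont : Continuous fun t : ℝ => (inner ℝ (gradient f (x - t • v)) (-v) : ℝ) := by
    exact (hgradcont.comp (continuous_const.sub (continuous_id.smul continuous_const))).inner continuous_const
  -- FTC
  have hFTC : f (x - v) - f x = ∫ t in (0:ℝ)..1, (inner ℝ (gradient f (x - t • v)) (-v) : ℝ) := by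
    rw [intervalIntegral.integral_eq_sub_of_hasDerivAt (fun t _ => hφ t)
      (hcont.intervalIntegrable 0 1)]
    norm_num
  -- pointwise bound on the integrand
  have hbound : ∀ t ∈ Set.Icc (0:ℝ) 1,
      (inner ℝ (gradient f (x - t • v)) (-v) : ℝ) ≤ (inner ℝ g (-v) : ℝ) + L * δ ^ 2 * t := by
    intro t ht
    have h1 : (inner ℝ (gradient f (x - t • v)) (-v) : ℝ)
        = (inner ℝ g (-v) : ℝ) + (inner ℝ (gradient f (x - t • v) - g) (-v) : ℝ) := by
      rw [← inner_add_left]; congr 1; abel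
    have h2 : (inner ℝ (gradient f (x - t • v) - g) (-v) : ℝ)
        ≤ ‖gradient f (x - t • v) - g‖ * ‖v‖ := by
      calc (inner ℝ (gradient f (x - t • v) - g) (-v) : ℝ)
          ≤ ‖gradient f (x - t • v) - g‖ * ‖-v‖ := real_inner_le_norm _ _
        _ = ‖gradient f (x - t • v) - g‖ * ‖v‖ := by rw [norm_neg]
    have h3 : ‖gradient f (x - t • v) - g‖ ≤ L * (t * δ) := by
      have := hlip (x - t • v) x
      have he : ‖x - t • v - x‖ = t * δ := by
        rw [sub_sub_cancel_left, norm_neg, norm_smul, Real.norm_eq_abs,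
          abs_of_nonneg ht.1, hvnorm]
      rw [he] at this
      exact this
    have h4 : ‖gradient f (x - t • v) - g‖ * ‖v‖ ≤ L * (t * δ) * δ := by
      rw [hvnorm]
      exact mul_le_mul_of_nonneg_right h3 hδ.le
    have h5 : L * (t * δ) * δ = L * δ ^ 2 * t := by ring
    rw [h1]
    linarith [h2.trans h4]
  -- integral bound
  have hint : (∫ t in (0:ℝ)..1, (inner ℝ (gradient f (x - t • v)) (-v) : ℝ))
      ≤ ∫ t in (0:ℝ)..1, ((inner ℝ g (-v) : ℝ) + L * δ ^ 2 * t) := by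
    apply intervalIntegral.integral_mono_on (by norm_num)
      (hcont.intervalIntegrable 0 1)
      ((continuous_const.add (continuous_const.mul continuous_id)).intervalIntegrable 0 1)
    intro t ht
    exact hbound t ht
  have hrhs : (∫ t in (0:ℝ)..1, ((inner ℝ g (-v) : ℝ) + L * δ ^ 2 * t))
      = (inner ℝ g (-v) : ℝ) + L * δ ^ 2 / 2 := by
    rw [intervalIntegral.integral_add intervalIntegrable_const
      ((intervalIntegral.intervalIntegrable_id).const_mul _),
      intervalIntegral.integral_const_mul, integral_id]
    norm_num
    ring
  -- bound inner g (-v)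
  have hinner : (inner ℝ g (-v) : ℝ) ≤ -(δ * ‖ghat‖) + ζ * δ ^ 2 := by
    have h1 : (inner ℝ g (-v) : ℝ) = -c * (inner ℝ g ghat : ℝ) := by
      rw [hvdef, inner_neg_right, inner_smul_right]; ring
    have h2 : (inner ℝ g ghat : ℝ) = ‖ghat‖ ^ 2 - (inner ℝ (ghat - g) ghat : ℝ) := by
      rw [inner_sub_left, real_inner_self_eq_norm_sq]; ring
    have h3 : (inner ℝ (ghat - g) ghat : ℝ) ≤ ζ * δ * ‖ghat‖ := by
      calc (inner ℝ (ghat - g) ghat : ℝ) ≤ ‖ghat - g‖ * ‖ghat‖ := real_inner_le_norm _ _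
        _ ≤ ζ * δ * ‖ghat‖ := mul_le_mul_of_nonneg_right hacc hgh_pos.le
    have hcg : c * ‖ghat‖ = δ := by rw [hcdef]; exact div_mul_cancel₀ _ (ne_of_gt hgh_pos)
    have h5 : c * ‖ghat‖ ^ 2 = δ * ‖ghat‖ := by rw [pow_two, ← mul_assoc, hcg]
    have h6 : c * (ζ * δ * ‖ghat‖) = ζ * δ ^ 2 := by
      have : ζ * δ * (c * ‖ghat‖) = ζ * δ * δ := by rw [hcg]
      linear_combination this
    rw [h1, h2]
    nlinarith [mul_le_mul_of_nonneg_left h3 hc, h5, h6]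
  -- combine
  have hx : f (x - v) ≤ f x + (inner ℝ g (-v) : ℝ) + L * δ ^ 2 / 2 := by
    have := hFTC
    linarith [hint.trans_eq hrhs]
  have hfinal : f (x - v) ≤ f x - η * δ ^ 2 := by
    have hd : (L / 2 + η + ζ) * δ * δ ≤ ‖ghat‖ * δ := mul_le_mul_of_nonneg_right hghat hδ.le
    nlinarith
  simpa [hvdef, hcdef] using hfinal
end

section
/- Let μ > 0, let {G_k} ⊂ [0,∞) be a sequence of nonnegative reals with G₀ > 0, and let {δ_k} ⊂ (0,∞) be a sequence such that for every k ≥ 0, δ_{k+1} ∈ {2δ_k, δ_k/2}, and δ_{k+1} = 2δ_k whenever δ_k ≤ μ G_k. Set ν = min{δ₀/G₀, μ/2}. Then for every k ≥ 0, δ_k ≥ ν · min{G_ℓ : 0 ≤ ℓ ≤ k}. -/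
open Filter Topology

/-- Trust-region-style lower bound: if `δ` is doubled or halved at each step, and is always
doubled when `δ k ≤ μ G k`, then `δ k ≥ ν · min {G ℓ : ℓ ≤ k}` with
`ν = min (δ 0 / G 0) (μ / 2)`. -/
theorem delta_lower_bound (μ : ℝ) (hμ : 0 < μ)
    (G : ℕ → ℝ) (hG : ∀ k, 0 ≤ G k) (hG0 : 0 < G 0)
    (δ : ℕ → ℝ) (hδ : ∀ k, 0 < δ k)
    (hupd : ∀ k, δ (k + 1) = 2 * δ k ∨ δ (k + 1) = δ k / 2)
    (hdouble : ∀ k, δ k ≤ μ * G k → δ (k + 1) = 2 * δ k) :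
    ∀ k, min (δ 0 / G 0) (μ / 2) * (Finset.range (k + 1)).inf' (by simp) G ≤ δ k := by
  set ν := min (δ 0 / G 0) (μ / 2) with hν
  have hν0 : 0 < ν := lt_min (div_pos (hδ 0) hG0) (by linarith)
  intro k
  induction k with
  | zero =>
    simp only [zero_add, Finset.range_one, Finset.inf'_singleton]
    calc ν * G 0 ≤ (δ 0 / G 0) * G 0 :=
          mul_le_mul_of_nonneg_right (min_le_left _ _) (hG 0)
      _ = δ 0 := by field_simp
  | succ k ih =>
    have hmono : (Finset.range (k + 2)).inf' (by simp) G
        ≤ (Finset.range (k + 1)).inf' (by simp) G := by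
      exact Finset.inf'_mono G (Finset.range_subset_range.mpr (by omega)) (by simp)
    have hk_mem : G k ∈ (Finset.range (k + 2)).image G := by
      exact Finset.mem_image_of_mem G (Finset.mem_range.mpr (by omega))
    have hinf_le_Gk : (Finset.range (k + 2)).inf' (by simp) G ≤ G k :=
      Finset.inf'_le G (Finset.mem_range.mpr (by omega))
    rcases hupd k with h | h
    · calc ν * (Finset.range (k + 2)).inf' (by simp) G
          ≤ ν * (Finset.range (k + 1)).inf' (by simp) G :=
            mul_le_mul_of_nonneg_left hmono hν0.le
        _ ≤ δ k := ih
        _ ≤ 2 * δ k := by linarith [(hδ k).le]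
        _ = δ (k + 1) := h.symm
    · have hgt : μ * G k < δ k := by
        by_contra hle
        push_neg at hle
        have := hdouble k hle
        rw [h] at this
        linarith [hδ k]
      calc ν * (Finset.range (k + 2)).inf' (by simp) G
          ≤ (μ / 2) * G k := by
            apply mul_le_mul (min_le_right _ _) hinf_le_Gk
            · exact Finset.le_inf' _ _ (fun i _ => hG i)
            · linarith
        _ ≤ δ k / 2 := by linarith
        _ = δ (k + 1) := h.symm
end

section
/- Let f : ℝⁿ → ℝ be bounded below with f_* = inf f, let η > 0, let {x_k} ⊂ ℝⁿ with f_k = f(x_k) satisfy f_{k+1} ≤ f_k for every k ≥ 0, and let {δ_k} ⊂ (0,∞) satisfy: δ_{k+1} = 2δ_k if k ∈ K and δ_{k+1} = δ_k/2 if k ∉ K, where K ⊆ ℕ is a set of indices such that f_{k+1} ≤ f_k − ηδ_k² for every k ∈ K. Then δ_k → 0 as k → ∞. -/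
open Filter Topology

/-- The trust parameters of the derivative-free OptimIST framework tend to zero: `δ` is doubled
exactly on a set `K` of iterations where `f` decreases by at least `η δ k ^ 2`, and halved
elsewhere; then `δ k → 0`. -/
theorem delta_tendsto_zero {n : ℕ}
    (f : EuclideanSpace ℝ (Fin n) → ℝ)
    (hbdd : BddBelow (Set.range f))
    (η : ℝ) (hη : 0 < η)
    (x : ℕ → EuclideanSpace ℝ (Fin n))
    (hmono : ∀ k, f (x (k + 1)) ≤ f (x k))
    (δ : ℕ → ℝ) (hδ : ∀ k, 0 < δ k)
    (K : Set ℕ)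
    (hdec : ∀ k ∈ K, f (x (k + 1)) ≤ f (x k) - η * δ k ^ 2)
    (hupd : ∀ k, (k ∈ K → δ (k + 1) = 2 * δ k) ∧ (k ∉ K → δ (k + 1) = δ k / 2)) :
    Tendsto δ atTop (𝓝 0) := by
  classical
  obtain ⟨B, hB⟩ := hbdd
  have hBle : ∀ y, B ≤ f y := fun y => hB ⟨y, rfl⟩
  -- telescoping sum bound
  have hsum : ∀ m, η * ∑ k ∈ Finset.range m, (if k ∈ K then δ k ^ 2 else 0)
      ≤ f (x 0) - f (x m) := by
    intro m
    induction m with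
    | zero => simp
    | succ m ih =>
      rw [Finset.sum_range_succ, mul_add]
      by_cases hm : m ∈ K
      · have h := hdec m hm
        simp only [hm, if_true]
        linarith
      · simp only [hm, if_false, mul_zero]
        linarith [hmono m]
  -- key: on K, δ is eventually small
  have key : ∀ ε : ℝ, 0 < ε → ∃ N, ∀ k, N ≤ k → k ∈ K → δ k < ε := by
    intro ε hε
    set S : Set ℕ := {k | k ∈ K ∧ ε ≤ δ k} with hS
    have hfin : S.Finite := by
      by_contra hinf
      replace hinf : S.Infinite := hinf
      set C : ℝ := (f (x 0) - B) / (η * ε ^ 2) with hC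
      obtain ⟨T, hTsub, hTcard⟩ := hinf.exists_subset_card_eq (⌈C⌉₊ + 1)
      set m : ℕ := T.sup id + 1 with hm
      have hTm : T ⊆ Finset.range m := by
        intro k hk
        exact Finset.mem_range.2 (Nat.lt_succ_of_le (Finset.le_sup (f := id) hk))
      have h1 : (T.card : ℝ) * ε ^ 2 ≤
          ∑ k ∈ Finset.range m, (if k ∈ K then δ k ^ 2 else 0) := by
        calc (T.card : ℝ) * ε ^ 2 = ∑ _k ∈ T, ε ^ 2 := by
              rw [Finset.sum_const, nsmul_eq_mul]
          _ ≤ ∑ k ∈ T, (if k ∈ K then δ k ^ 2 else 0) := by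
              apply Finset.sum_le_sum
              intro k hk
              obtain ⟨hkK, hkε⟩ := hTsub hk
              simp only [hkK, if_true]
              exact pow_le_pow_left₀ hε.le hkε 2
          _ ≤ ∑ k ∈ Finset.range m, (if k ∈ K then δ k ^ 2 else 0) := by
              apply Finset.sum_le_sum_of_subset_of_nonneg hTm
              intro k _ _
              positivity
      have h2 := hsum m
      have hεη : 0 < η * ε ^ 2 := by positivity
      have h3 : (T.card : ℝ) * (η * ε ^ 2) ≤ f (x 0) - B := by
        have := hBle (x m)
        nlinarith
      have h4 : C < (T.card : ℝ) := by
        rw [hTcard]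
        push_cast
        calc C ≤ (⌈C⌉₊ : ℝ) := Nat.le_ceil C
          _ < (⌈C⌉₊ : ℝ) + 1 := by linarith
      have h5 : f (x 0) - B < (T.card : ℝ) * (η * ε ^ 2) := by
        have := (div_lt_iff₀ hεη).mp h4
        linarith
      linarith
    obtain ⟨a, ha⟩ := hfin.bddAbove
    refine ⟨a + 1, fun k hk hkK => ?_⟩
    by_contra hcon
    push_neg at hcon
    have : k ∈ S := ⟨hkK, hcon⟩
    have := ha this
    omega
  -- main argument
  rw [Metric.tendsto_atTop]
  intro ε hε
  obtain ⟨N, hN⟩ := key (ε / 4) (by linarith)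
  have hmax : ∀ j, δ (N + j) ≤ max (δ N / 2 ^ j) (ε / 2) := by
    intro j
    induction j with
    | zero => simp
    | succ j ih =>
      by_cases hK : N + j ∈ K
      · have h1 : δ (N + j) < ε / 4 := hN _ (Nat.le_add_right N j) hK
        have h2 : δ (N + (j + 1)) = 2 * δ (N + j) := by
          have := (hupd (N + j)).1 hK
          rwa [← Nat.add_assoc]
        rw [h2]
        have : 2 * δ (N + j) ≤ ε / 2 := by linarith
        exact this.trans (le_max_right _ _)
      · have h2 : δ (N + (j + 1)) = δ (N + j) / 2 := by
          have := (hupd (N + j)).2 hK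
          rwa [← Nat.add_assoc]
        rw [h2]
        rcases le_max_iff.mp ih with h | h
        · refine le_trans ?_ (le_max_left _ _)
          rw [pow_succ]
          have h2pos : (0:ℝ) < 2 ^ j := by positivity
          rw [div_le_div_iff₀ (by norm_num) (by positivity)]
          calc δ (N + j) * (2 ^ j * 2) = (δ (N + j) * 2 ^ j) * 2 := by ring
            _ ≤ (δ N / 2 ^ j * 2 ^ j) * 2 := by
                have := mul_le_mul_of_nonneg_right h h2pos.le
                linarith
            _ = δ N * 2 := by field_simp
        · refine le_trans ?_ (le_max_right _ _)
          linarith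
  obtain ⟨J, hJ⟩ := pow_unbounded_of_one_lt (δ N / (ε / 2)) (one_lt_two (α := ℝ))
  have hJ' : δ N / 2 ^ J < ε / 2 := by
    rw [div_lt_iff₀ (by positivity)]
    rw [div_lt_iff₀ (by linarith)] at hJ
    linarith
  refine ⟨N + J, fun k hk => ?_⟩
  rw [Real.dist_eq, sub_zero, abs_of_pos (hδ k)]
  have hk' : k = N + (k - N) := by omega
  have hmono2 : δ N / 2 ^ (k - N) ≤ δ N / 2 ^ J := by
    apply div_le_div_of_nonneg_left (hδ N).le (by positivity)
    exact pow_le_pow_right₀ (by norm_num) (by omega)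
  have := hmax (k - N)
  rw [← hk'] at this
  have : δ k ≤ ε / 2 := this.trans (max_le (by linarith) le_rfl)
  linarith
end

section
/- Derivative-free OptimIST setup: let f : ℝⁿ → ℝ be differentiable with ∇f Lipschitz continuous on ℝⁿ with constant L ∈ (0,∞) and f bounded below with f_* = inf f; let η > 0, ζ > 0; let {x_k} ⊂ ℝⁿ, {ĝ_k} ⊂ ℝⁿ, {δ_k} ⊂ (0,∞) with f_k = f(x_k), g_k = ∇f(x_k), satisfying for every k ≥ 0: (i) f_{k+1} ≤ f_k; (ii) f_{k+1} ≤ max{f_k − ηδ_k², f(x_k − δ_k ĝ_k/‖ĝ_k‖)}, where ĝ_k/‖ĝ_k‖ is taken to be 0 if ĝ_k = 0; (iii) ‖ĝ_k − g_k‖ ≤ ζδ_k; (iv) δ_{k+1} = 2δ_k if both ‖ĝ_k‖ ≥ ηδ_k and f_{k+1} ≤ f_k − ηδ_k², and δ_{k+1} = δ_k/2 otherwise. Then liminf_{k→∞} ‖∇f(x_k)‖ = 0. -/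
open Filter Topology

/-- Descent lemma for a function with Lipschitz gradient. -/
lemma optimist_descent_lemma {E : Type*} [NormedAddCommGroup E] [InnerProductSpace ℝ E] [CompleteSpace E]
    (f : E → ℝ) (hdiff : Differentiable ℝ f) (L : ℝ) (hL : 0 ≤ L)
    (hlip : ∀ y z, ‖gradient f y - gradient f z‖ ≤ L * ‖y - z‖) (x v : E) :
    f (x + v) ≤ f x + inner ℝ (gradient f x) v + L / 2 * ‖v‖ ^ 2 := by
  have hc : ∀ t : ℝ, HasDerivAt (fun t : ℝ => x + t • v) v t := by
    intro t
    simpa using ((hasDerivAt_id t).smul_const v).const_add x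
  have hφ : ∀ t : ℝ, HasDerivAt (fun t : ℝ => f (x + t • v))
      (inner ℝ (gradient f (x + t • v)) v : ℝ) t := by
    intro t
    have h1 := (hdiff (x + t • v)).hasGradientAt
    rw [hasGradientAt_iff_hasFDerivAt] at h1
    have := h1.comp_hasDerivAt t (hc t)
    simpa [InnerProductSpace.toDual_apply_apply, Function.comp_def] using this
  set g : ℝ → ℝ := fun t => f (x + t • v) - t * (inner ℝ (gradient f x) v : ℝ)
    - L * ‖v‖ ^ 2 * t ^ 2 / 2 with hgdef
  have hg : ∀ t : ℝ, HasDerivAt g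
      ((inner ℝ (gradient f (x + t • v)) v : ℝ) - (inner ℝ (gradient f x) v : ℝ)
        - L * ‖v‖ ^ 2 * t) t := by
    intro t
    have h2 : HasDerivAt (fun t : ℝ => t * (inner ℝ (gradient f x) v : ℝ))
        (inner ℝ (gradient f x) v : ℝ) t := by
      simpa using (hasDerivAt_id t).mul_const (inner ℝ (gradient f x) v : ℝ)
    have h3 : HasDerivAt (fun t : ℝ => L * ‖v‖ ^ 2 * t ^ 2 / 2)
        (L * ‖v‖ ^ 2 * t) t := by
      have := ((hasDerivAt_pow 2 t).const_mul (L * ‖v‖ ^ 2)).div_const 2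
      exact this.congr_deriv (by ring)
    exact ((hφ t).sub h2).sub h3
  have hcont : ContinuousOn g (Set.Icc (0:ℝ) 1) :=
    fun t _ => ((hg t).differentiableAt.continuousAt).continuousWithinAt
  have hdiffg : DifferentiableOn ℝ g (interior (Set.Icc (0:ℝ) 1)) :=
    fun t _ => (hg t).differentiableAt.differentiableWithinAt
  have hnonpos : ∀ t ∈ interior (Set.Icc (0:ℝ) 1), deriv g t ≤ 0 := by
    intro t ht
    rw [interior_Icc, Set.mem_Ioo] at ht
    rw [(hg t).deriv]
    have h1 : (inner ℝ (gradient f (x + t • v)) v : ℝ) - (inner ℝ (gradient f x) v : ℝ)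
        = (inner ℝ (gradient f (x + t • v) - gradient f x) v : ℝ) := by
      rw [inner_sub_left]
    rw [h1]
    have h2 : (inner ℝ (gradient f (x + t • v) - gradient f x) v : ℝ)
        ≤ ‖gradient f (x + t • v) - gradient f x‖ * ‖v‖ := real_inner_le_norm _ _
    have h3 : ‖gradient f (x + t • v) - gradient f x‖ ≤ L * (t * ‖v‖) := by
      have := hlip (x + t • v) x
      simpa [norm_smul, abs_of_pos ht.1] using this
    have h4 : ‖gradient f (x + t • v) - gradient f x‖ * ‖v‖ ≤ L * (t * ‖v‖) * ‖v‖ :=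
      mul_le_mul_of_nonneg_right h3 (norm_nonneg _)
    nlinarith [norm_nonneg v]
  have hanti := antitoneOn_of_deriv_nonpos (convex_Icc (0:ℝ) 1) hcont hdiffg hnonpos
  have := hanti (Set.left_mem_Icc.2 zero_le_one) (Set.right_mem_Icc.2 zero_le_one) zero_le_one
  simp only [hgdef, one_smul, zero_smul, add_zero, one_mul, zero_mul, one_pow, zero_pow,
    mul_zero, mul_one, sub_zero] at this
  linarith

/-- Global convergence of the derivative-free OptimIST framework (Algorithm 3.2):
`liminf ‖∇f (x k)‖ = 0`. -/
theorem optimist_liminf_gradient_zero {n : ℕ}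
    (f : EuclideanSpace ℝ (Fin n) → ℝ)
    (hdiff : Differentiable ℝ f)
    (L : ℝ) (hL : 0 < L)
    (hlip : ∀ y z, ‖gradient f y - gradient f z‖ ≤ L * ‖y - z‖)
    (hbdd : BddBelow (Set.range f))
    (η ζ : ℝ) (hη : 0 < η) (hζ : 0 < ζ)
    (x ghat : ℕ → EuclideanSpace ℝ (Fin n)) (δ : ℕ → ℝ) (hδ : ∀ k, 0 < δ k)
    (hmono : ∀ k, f (x (k + 1)) ≤ f (x k))
    (hsd : ∀ k, f (x (k + 1)) ≤
      max (f (x k) - η * δ k ^ 2) (f (x k - (δ k / ‖ghat k‖) • ghat k)))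
    (hacc : ∀ k, ‖ghat k - gradient f (x k)‖ ≤ ζ * δ k)
    (hupd : ∀ k,
      ((η * δ k ≤ ‖ghat k‖ ∧ f (x (k + 1)) ≤ f (x k) - η * δ k ^ 2) → δ (k + 1) = 2 * δ k) ∧
      (¬(η * δ k ≤ ‖ghat k‖ ∧ f (x (k + 1)) ≤ f (x k) - η * δ k ^ 2) → δ (k + 1) = δ k / 2)) :
    Filter.liminf (fun k => ‖gradient f (x k)‖) atTop = 0 := by
  classical
  set C : ℝ := η + 2 * ζ + L / 2 with hCdef
  have hC : 0 < C := by positivity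
  have descent : ∀ p v : EuclideanSpace ℝ (Fin n),
      f (p + v) ≤ f p + inner ℝ (gradient f p) v + L / 2 * ‖v‖ ^ 2 :=
    optimist_descent_lemma f hdiff L hL.le hlip
  have hA : Antitone (fun k => f (x k)) := antitone_nat_of_succ_le hmono
  obtain ⟨B, hB⟩ := hbdd
  have hBf : ∀ p, B ≤ f p := fun p => hB ⟨p, rfl⟩
  -- frequently small gradient
  have hfreq : ∀ ε : ℝ, 0 < ε → ∃ᶠ k in atTop, ‖gradient f (x k)‖ < ε := by
    intro ε hε
    by_contra hcon
    rw [not_frequently] at hcon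
    obtain ⟨N, hN⟩ := eventually_atTop.1 (hcon.mono fun k hk => not_lt.1 hk)
    -- key A : at failures, ε ≤ C * δ k
    have keyA : ∀ k, N ≤ k →
        ¬(η * δ k ≤ ‖ghat k‖ ∧ f (x (k + 1)) ≤ f (x k) - η * δ k ^ 2) → ε ≤ C * δ k := by
      intro k hk hfail
      have hg : ε ≤ ‖gradient f (x k)‖ := hN k hk
      have hgle : ‖gradient f (x k)‖ ≤ ‖ghat k‖ + ζ * δ k := by
        have h1 : gradient f (x k) = ghat k - (ghat k - gradient f (x k)) := by abel
        calc ‖gradient f (x k)‖ = ‖ghat k - (ghat k - gradient f (x k))‖ := by rw [← h1]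
          _ ≤ ‖ghat k‖ + ‖ghat k - gradient f (x k)‖ := norm_sub_le _ _
          _ ≤ ‖ghat k‖ + ζ * δ k := by linarith [hacc k]
      by_cases hbig : η * δ k ≤ ‖ghat k‖
      · have hnd : f (x k) - η * δ k ^ 2 < f (x (k + 1)) :=
          lt_of_not_ge fun h => hfail ⟨hbig, h⟩
        have hgpos : 0 < ‖ghat k‖ := lt_of_lt_of_le (mul_pos hη (hδ k)) hbig
        have h2 : f (x k) - η * δ k ^ 2 < f (x k - (δ k / ‖ghat k‖) • ghat k) := by
          rcases lt_max_iff.1 (hnd.trans_le (hsd k)) with h | h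
          · exact absurd h (lt_irrefl _)
          · exact h
        set v : EuclideanSpace ℝ (Fin n) := -((δ k / ‖ghat k‖) • ghat k) with hvdef
        have hxv : x k - (δ k / ‖ghat k‖) • ghat k = x k + v := by
          rw [hvdef, sub_eq_add_neg]
        have hnv : ‖v‖ = δ k := by
          rw [hvdef, norm_neg, norm_smul, Real.norm_eq_abs,
            abs_of_nonneg (div_nonneg (hδ k).le hgpos.le)]
          field_simp
        have hinner : (inner ℝ (gradient f (x k)) v : ℝ)
            ≤ -(δ k * ‖ghat k‖) + ζ * δ k ^ 2 := by
          have hin2 : (inner ℝ (ghat k - gradient f (x k)) (ghat k) : ℝ)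
              ≤ ζ * δ k * ‖ghat k‖ :=
            (real_inner_le_norm _ _).trans
              (mul_le_mul_of_nonneg_right (hacc k) (norm_nonneg _))
          have hin3 : (inner ℝ (ghat k) (ghat k) : ℝ) = ‖ghat k‖ ^ 2 := by
            rw [real_inner_self_eq_norm_sq]
          have hin4 : (inner ℝ (gradient f (x k)) (ghat k) : ℝ)
              = (inner ℝ (ghat k) (ghat k) : ℝ)
                - (inner ℝ (ghat k - gradient f (x k)) (ghat k) : ℝ) := by
            rw [← inner_sub_left]
            congr 1
            abel
          have hin1 : ‖ghat k‖ ^ 2 - ζ * δ k * ‖ghat k‖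
              ≤ (inner ℝ (gradient f (x k)) (ghat k) : ℝ) := by
            rw [hin4, hin3]; linarith
          have hveq : (inner ℝ (gradient f (x k)) v : ℝ)
              = -(δ k / ‖ghat k‖) * (inner ℝ (gradient f (x k)) (ghat k) : ℝ) := by
            rw [hvdef, inner_neg_right, real_inner_smul_right]
            ring
          rw [hveq]
          have hcoef : -(δ k / ‖ghat k‖) ≤ 0 := by
            apply neg_nonpos_of_nonneg
            exact div_nonneg (hδ k).le hgpos.le
          have := mul_le_mul_of_nonpos_left hin1 hcoef
          calc -(δ k / ‖ghat k‖) * (inner ℝ (gradient f (x k)) (ghat k) : ℝ)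
              ≤ -(δ k / ‖ghat k‖) * (‖ghat k‖ ^ 2 - ζ * δ k * ‖ghat k‖) := this
            _ = -(δ k * ‖ghat k‖) + ζ * δ k ^ 2 := by
                field_simp
                ring
        have hdesc := descent (x k) v
        rw [hxv] at h2
        rw [hnv] at hdesc
        have hkey : δ k * ‖ghat k‖ < (η + ζ + L / 2) * δ k ^ 2 := by nlinarith
        have hgb : ‖ghat k‖ ≤ (η + ζ + L / 2) * δ k := by nlinarith [hδ k]
        have : ε ≤ (η + ζ + L / 2) * δ k + ζ * δ k := by linarith
        rw [hCdef]; linarith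
      · push_neg at hbig
        have h1 : ε ≤ (η + ζ) * δ k := by nlinarith
        have h2 : (η + ζ) * δ k ≤ C * δ k := by
          rw [hCdef]
          nlinarith [hδ k, hζ, hL]
        linarith
    set d : ℝ := min (δ N) (ε / (2 * C)) with hddef
    have hd : 0 < d := lt_min (hδ N) (by positivity)
    have keyB : ∀ k, N ≤ k → d ≤ δ k := by
      intro k hk
      induction k, hk using Nat.le_induction with
      | base => exact min_le_left _ _
      | succ k hk ih =>
        by_cases hS : η * δ k ≤ ‖ghat k‖ ∧ f (x (k + 1)) ≤ f (x k) - η * δ k ^ 2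
        · rw [(hupd k).1 hS]; linarith [hδ k]
        · rw [(hupd k).2 hS]
          have h1 := keyA k hk hS
          have h2 : ε / (2 * C) ≤ δ k / 2 := by
            rw [div_le_div_iff₀ (by positivity) two_pos]
            nlinarith
          exact le_trans (min_le_right _ _) h2
    -- finitely many successes
    have hfin : ∃ M, N ≤ M ∧ ∀ k, M ≤ k →
        ¬(η * δ k ≤ ‖ghat k‖ ∧ f (x (k + 1)) ≤ f (x k) - η * δ k ^ 2) := by
      by_contra hcon2
      push_neg at hcon2
      have key : ∀ j : ℕ, ∃ m, N ≤ m ∧ f (x m) ≤ f (x N) - j * (η * d ^ 2) := by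
        intro j
        induction j with
        | zero => exact ⟨N, le_rfl, by simp⟩
        | succ j ih =>
          obtain ⟨m, hm, hfm⟩ := ih
          obtain ⟨k, hk, hSk⟩ := hcon2 m hm
          refine ⟨k + 1, by omega, ?_⟩
          have h1 : f (x (k + 1)) ≤ f (x k) - η * δ k ^ 2 := hSk.2
          have h2 : f (x k) ≤ f (x m) := hA hk
          have h3 : d ≤ δ k := keyB k (hm.trans hk)
          have h4 : η * d ^ 2 ≤ η * δ k ^ 2 := by
            have : d ^ 2 ≤ δ k ^ 2 := by nlinarith
            exact mul_le_mul_of_nonneg_left this hη.le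
          push_cast
          linarith
      obtain ⟨j, hj⟩ := exists_nat_gt ((f (x N) - B) / (η * d ^ 2))
      obtain ⟨m, _, hfm⟩ := key j
      have hpos : 0 < η * d ^ 2 := by positivity
      rw [div_lt_iff₀ hpos] at hj
      linarith [hBf (x m)]
    obtain ⟨M, hMN, hM⟩ := hfin
    have hhalf : ∀ j, δ (M + j) = δ M / 2 ^ j := by
      intro j
      induction j with
      | zero => simp
      | succ j ih =>
        have h1 := (hupd (M + j)).2 (hM _ (Nat.le_add_right _ _))
        rw [show M + (j + 1) = (M + j) + 1 from rfl, h1, ih]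
        ring
    obtain ⟨j, hj⟩ := pow_unbounded_of_one_lt (δ M / d) (one_lt_two (α := ℝ))
    have h1 : d ≤ δ (M + j) := keyB _ (hMN.trans (Nat.le_add_right _ _))
    rw [hhalf j] at h1
    have h2pow : (0:ℝ) < 2 ^ j := by positivity
    rw [div_lt_iff₀ hd] at hj
    have : δ M / 2 ^ j < d := by rw [div_lt_iff₀ h2pow]; linarith
    linarith
  -- conclude
  have hbdd0 : IsBoundedUnder (· ≥ ·) atTop (fun k => ‖gradient f (x k)‖) :=
    isBoundedUnder_of ⟨0, fun k => norm_nonneg _⟩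
  apply le_antisymm
  · by_contra hne
    push_neg at hne
    have h := liminf_le_of_frequently_le
      ((hfreq (liminf (fun k => ‖gradient f (x k)‖) atTop / 2) (by linarith)).mono
        fun k hk => hk.le) hbdd0
    linarith
  · exact le_liminf_of_le
      (IsCoboundedUnder.of_frequently_le ((hfreq 1 one_pos).mono fun k hk => hk.le))
      (Eventually.of_forall fun k => norm_nonneg _)
end

section
/- Derivative-free OptimIST setup: let f : ℝⁿ → ℝ be differentiable with ∇f Lipschitz continuous on ℝⁿ with constant L ∈ (0,∞) and f bounded below with f_* = inf f; let η > 0, ζ > 0; let {x_k} ⊂ ℝⁿ, {ĝ_k} ⊂ ℝⁿ, {δ_k} ⊂ (0,∞) with f_k = f(x_k), g_k = ∇f(x_k), satisfying for every k ≥ 0: (i) f_{k+1} ≤ f_k; (ii) f_{k+1} ≤ max{f_k − ηδ_k², f(x_k − δ_k ĝ_k/‖ĝ_k‖)}, where ĝ_k/‖ĝ_k‖ is taken to be 0 if ĝ_k = 0; (iii) ‖ĝ_k − g_k‖ ≤ ζδ_k; (iv) δ_{k+1} = 2δ_k if both ‖ĝ_k‖ ≥ ηδ_k and f_{k+1} ≤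 f_k − ηδ_k², and δ_{k+1} = δ_k/2 otherwise. Set μ = 2/(L + 2η + 4ζ) and, assuming g₀ ≠ 0, ν = min{δ₀/‖g₀‖, μ/2}. Then for every ε with 0 < ε ≤ ‖g₀‖, there exists an index k with ‖∇f(x_k)‖ ≤ ε and k ≤ 2(f(x₀) − f_*)/(η ν² ε²) + log₂(δ₀/(ν ε)) + 1. -/
open Filter Topology

lemma optimist_descent {n : ℕ} (f : EuclideanSpace ℝ (Fin n) → ℝ)
    (hdiff : Differentiable ℝ f) (L : ℝ)
    (hlip : ∀ y z, ‖gradient f y - gradient f z‖ ≤ L * ‖y - z‖)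
    (p w : EuclideanSpace ℝ (Fin n)) :
    f (p + w) ≤ f p + inner ℝ (gradient f p) w + L / 2 * ‖w‖ ^ 2 := by
  have hφ : ∀ t : ℝ, HasDerivAt (fun t : ℝ => f (p + t • w))
      (inner ℝ (gradient f (p + t • w)) w : ℝ) t := by
    intro t
    have h1 : HasDerivAt (fun t : ℝ => p + t • w) w t := by
      simpa using ((hasDerivAt_id t).smul_const w).const_add p
    have h2 := ((hdiff (p + t • w)).hasGradientAt).hasFDerivAt
    have h3 := h2.comp_hasDerivAt t h1
    simpa [InnerProductSpace.toDual_apply_apply, Function.comp_def] using h3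
  set c1 : ℝ := inner ℝ (gradient f p) w with hc1
  set c2 : ℝ := L * ‖w‖ ^ 2 / 2 with hc2
  set ψ : ℝ → ℝ := fun t => f (p + t • w) - t * c1 - t ^ 2 * c2 with hψ
  have hψd : ∀ t : ℝ, HasDerivAt ψ
      ((inner ℝ (gradient f (p + t • w)) w : ℝ) - c1 - 2 * t * c2) t := by
    intro t
    have h1 : HasDerivAt (fun t : ℝ => t * c1) c1 t := by
      simpa using (hasDerivAt_id t).mul_const c1
    have h2 : HasDerivAt (fun t : ℝ => t ^ 2 * c2) (2 * t * c2) t := by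
      simpa using (hasDerivAt_pow 2 t).mul_const c2
    exact ((hφ t).sub h1).sub h2
  have hanti : AntitoneOn ψ (Set.Icc (0 : ℝ) 1) := by
    apply antitoneOn_of_deriv_nonpos (convex_Icc 0 1)
    · exact Continuous.continuousOn (by
        exact continuous_iff_continuousAt.2 fun t => (hψd t).continuousAt)
    · intro t ht
      exact ((hψd t).differentiableAt).differentiableWithinAt
    · intro t ht
      rw [interior_Icc] at ht
      rw [(hψd t).deriv]
      have hin : (inner ℝ (gradient f (p + t • w)) w : ℝ) - c1
          = inner ℝ (gradient f (p + t • w) - gradient f p) w := by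
        rw [inner_sub_left]
      rw [hin]
      have hcs : (inner ℝ (gradient f (p + t • w) - gradient f p) w : ℝ)
          ≤ ‖gradient f (p + t • w) - gradient f p‖ * ‖w‖ := real_inner_le_norm _ _
      have hlb : ‖gradient f (p + t • w) - gradient f p‖ ≤ L * (t * ‖w‖) := by
        have := hlip (p + t • w) p
        simpa [norm_smul, abs_of_pos ht.1] using this
      have hw : (0:ℝ) ≤ ‖w‖ := norm_nonneg _
      have hmul := mul_le_mul_of_nonneg_right hlb hw
      have heq : L * (t * ‖w‖) * ‖w‖ = 2 * t * c2 := by rw [hc2]; ring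
      linarith [hcs, hmul]
  have h01 := hanti (Set.left_mem_Icc.2 zero_le_one) (Set.right_mem_Icc.2 zero_le_one) zero_le_one
  simp only [hψ] at h01
  norm_num at h01
  linarith

/-- Worst-case complexity of the derivative-free OptimIST framework in the nonconvex case:
for every `0 < ε ≤ ‖∇f (x 0)‖` there is an index
`k ≤ 2 (f (x 0) - f_*)/(η ν² ε²) + log₂ (δ 0/(ν ε)) + 1` with `‖∇f (x k)‖ ≤ ε`,
where `ν = min (δ 0 / ‖∇f (x 0)‖) (μ / 2)` and `μ = 2/(L + 2η + 4ζ)`. -/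
theorem optimist_complexity_nonconvex {n : ℕ}
    (f : EuclideanSpace ℝ (Fin n) → ℝ)
    (hdiff : Differentiable ℝ f)
    (L : ℝ) (hL : 0 < L)
    (hlip : ∀ y z, ‖gradient f y - gradient f z‖ ≤ L * ‖y - z‖)
    (hbdd : BddBelow (Set.range f))
    (η ζ : ℝ) (hη : 0 < η) (hζ : 0 < ζ)
    (x ghat : ℕ → EuclideanSpace ℝ (Fin n)) (δ : ℕ → ℝ) (hδ : ∀ k, 0 < δ k)
    (hmono : ∀ k, f (x (k + 1)) ≤ f (x k))
    (hsd : ∀ k, f (x (k + 1)) ≤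
      max (f (x k) - η * δ k ^ 2) (f (x k - (δ k / ‖ghat k‖) • ghat k)))
    (hacc : ∀ k, ‖ghat k - gradient f (x k)‖ ≤ ζ * δ k)
    (hupd : ∀ k,
      ((η * δ k ≤ ‖ghat k‖ ∧ f (x (k + 1)) ≤ f (x k) - η * δ k ^ 2) → δ (k + 1) = 2 * δ k) ∧
      (¬(η * δ k ≤ ‖ghat k‖ ∧ f (x (k + 1)) ≤ f (x k) - η * δ k ^ 2) → δ (k + 1) = δ k / 2))
    (μ ν : ℝ) (hμ : μ = 2 / (L + 2 * η + 4 * ζ))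
    (hg0 : gradient f (x 0) ≠ 0)
    (hν : ν = min (δ 0 / ‖gradient f (x 0)‖) (μ / 2)) :
    ∀ ε : ℝ, 0 < ε → ε ≤ ‖gradient f (x 0)‖ →
      ∃ k : ℕ, ‖gradient f (x k)‖ ≤ ε ∧
        (k : ℝ) ≤ 2 * (f (x 0) - ⨅ y, f y) / (η * ν ^ 2 * ε ^ 2) +
          Real.logb 2 (δ 0 / (ν * ε)) + 1 := by
  classical
  intro ε hε hεg
  have hD : (0:ℝ) < L + 2 * η + 4 * ζ := by linarith
  have hμpos : 0 < μ := by rw [hμ]; positivity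
  have hg0pos : 0 < ‖gradient f (x 0)‖ := norm_pos_iff.2 hg0
  have hνpos : 0 < ν := by
    rw [hν]; exact lt_min (div_pos (hδ 0) hg0pos) (half_pos hμpos)
  have hνε : 0 < ν * ε := mul_pos hνpos hε
  -- the `success` predicate
  obtain ⟨succ, hsucc_iff⟩ : ∃ p : ℕ → Prop, ∀ k, p k ↔
      (η * δ k ≤ ‖ghat k‖ ∧ f (x (k + 1)) ≤ f (x k) - η * δ k ^ 2) :=
    ⟨_, fun k => Iff.rfl⟩
  -- Lemma B : small step relative to gradient implies success
  have hkey : ∀ k, δ k ≤ μ * ‖gradient f (x k)‖ → succ k ∧ δ (k + 1) = 2 * δ k := by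
    intro k hk
    set d := δ k with hd
    set g := gradient f (x k) with hgk
    set G := ghat k with hG
    have hdpos : 0 < d := hδ k
    have hDg : d * (L + 2 * η + 4 * ζ) ≤ 2 * ‖g‖ := by
      rw [hμ] at hk
      rw [div_mul_eq_mul_div, le_div_iff₀ hD] at hk
      linarith
    have hmpos : 0 < d * L ∧ 0 < d * η ∧ 0 < d * ζ :=
      ⟨mul_pos hdpos hL, mul_pos hdpos hη, mul_pos hdpos hζ⟩
    have hgpos : 0 < ‖g‖ := by nlinarith [hmpos.1, hmpos.2.1, hmpos.2.2]
    have hGg : ‖G - g‖ ≤ ζ * d := hacc k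
    have hGlb : ‖g‖ - ζ * d ≤ ‖G‖ := by
      have h1 : ‖g‖ - ‖G‖ ≤ ‖g - G‖ := norm_sub_norm_le g G
      have h2 : ‖g - G‖ = ‖G - g‖ := norm_sub_rev g G
      linarith
    have hGpos : 0 < ‖G‖ := by nlinarith [hmpos.1, hmpos.2.1, hmpos.2.2]
    have hetaG : η * d ≤ ‖G‖ := by nlinarith [hmpos.1, hmpos.2.1, hmpos.2.2]
    -- descent at the trial point
    have hdesc := optimist_descent f hdiff L hlip (x k) (-((d / ‖G‖) • G))
    rw [← sub_eq_add_neg, ← hgk] at hdesc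
    have hnw : ‖-((d / ‖G‖) • G)‖ = d := by
      rw [norm_neg, norm_smul, norm_div, Real.norm_eq_abs, abs_of_pos hdpos,
        Real.norm_eq_abs, abs_of_pos hGpos, div_mul_cancel₀ _ (ne_of_gt hGpos)]
    have hinner : (inner ℝ g (-((d / ‖G‖) • G)) : ℝ) ≤ -(d * ‖G‖) + ζ * d ^ 2 := by
      rw [inner_neg_right, real_inner_smul_right]
      have hgG : (‖G‖:ℝ) ^ 2 - ζ * d * ‖G‖ ≤ inner ℝ g G := by
        have h1 : (inner ℝ (g - G) G : ℝ) = inner ℝ g G - inner ℝ G G := by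
          rw [inner_sub_left]
        have h2 : (inner ℝ (g - G) G : ℝ) ≥ -(‖g - G‖ * ‖G‖) := by
          have := real_inner_le_norm (G - g) G
          have h3 : (inner ℝ (G - g) G : ℝ) = -(inner ℝ (g - G) G : ℝ) := by
            rw [← inner_neg_left]; congr 1; abel
          have h4 : ‖G - g‖ = ‖g - G‖ := norm_sub_rev G g
          rw [h4] at this
          linarith
        have h5 : (inner ℝ G G : ℝ) = ‖G‖ ^ 2 := real_inner_self_eq_norm_sq G
        have h6 : ‖g - G‖ * ‖G‖ ≤ ζ * d * ‖G‖ := by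
          apply mul_le_mul_of_nonneg_right _ (norm_nonneg _)
          rw [norm_sub_rev]; exact hGg
        linarith
      have hpos : 0 < d / ‖G‖ := div_pos hdpos hGpos
      have := mul_le_mul_of_nonneg_left hgG (le_of_lt hpos)
      have heq : d / ‖G‖ * (‖G‖ ^ 2 - ζ * d * ‖G‖) = d * ‖G‖ - ζ * d ^ 2 := by
        field_simp
      linarith
    have hmul1 : d * (‖g‖ - ζ * d) ≤ d * ‖G‖ :=
      mul_le_mul_of_nonneg_left hGlb hdpos.le
    have hmul2 : d * (d * (L + 2 * η + 4 * ζ)) ≤ d * (2 * ‖g‖) :=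
      mul_le_mul_of_nonneg_left hDg hdpos.le
    have htrial : f (x k - (d / ‖G‖) • G) ≤ f (x k) - η * d ^ 2 := by
      rw [hnw] at hdesc
      linarith [hdesc, hinner, hmul1, hmul2]
    have hfdec : f (x (k + 1)) ≤ f (x k) - η * d ^ 2 :=
      le_trans (hsd k) (max_le le_rfl htrial)
    exact ⟨(hsucc_iff k).2 ⟨hetaG, hfdec⟩, (hupd k).1 ⟨hetaG, hfdec⟩⟩
  -- Lemma C : lower bound on δ while gradients are large
  have hδlb : ∀ k, (∀ j, j < k → ε < ‖gradient f (x j)‖) → ν * ε ≤ δ k := by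
    intro k
    induction k with
    | zero =>
      intro _
      have h1 : ν ≤ δ 0 / ‖gradient f (x 0)‖ := by rw [hν]; exact min_le_left _ _
      have h2 : ν * ε ≤ (δ 0 / ‖gradient f (x 0)‖) * ‖gradient f (x 0)‖ :=
        mul_le_mul h1 hεg (le_of_lt hε) (div_pos (hδ 0) hg0pos).le
      rwa [div_mul_cancel₀ _ (ne_of_gt hg0pos)] at h2
    | succ k ih =>
      intro hbig
      have ihk : ν * ε ≤ δ k := ih fun j hj => hbig j (Nat.lt_succ_of_lt hj)
      have hgk : ε < ‖gradient f (x k)‖ := hbig k (Nat.lt_succ_self k)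
      by_cases h : δ k ≤ μ * ‖gradient f (x k)‖
      · have := (hkey k h).2
        rw [this]
        linarith [hδ k]
      · push_neg at h
        have hνμ : ν ≤ μ / 2 := by rw [hν]; exact min_le_right _ _
        have hhalf : δ k / 2 ≤ δ (k + 1) := by
          rcases Classical.em (succ k) with hs | hs
          · rw [(hupd k).1 ((hsucc_iff k).1 hs)]; linarith [hδ k]
          · rw [(hupd k).2 (fun hr => hs ((hsucc_iff k).2 hr))]
        have hmue : μ * ε < δ k := lt_trans (mul_lt_mul_of_pos_left hgk hμpos) h
        have hnume : ν * ε ≤ μ / 2 * ε := mul_le_mul_of_nonneg_right hνμ hε.le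
        linarith
  -- the success counter
  obtain ⟨S, hS0, hSstep⟩ : ∃ S : ℕ → ℕ, S 0 = 0 ∧
      ∀ k, (succ k → S (k + 1) = S k + 1) ∧ (¬succ k → S (k + 1) = S k) := by
    refine ⟨fun k => ((Finset.range k).filter succ).card, by simp, fun k => ⟨?_, ?_⟩⟩ <;>
      intro h
    · show ((Finset.range (k+1)).filter succ).card = ((Finset.range k).filter succ).card + 1
      rw [Finset.range_add_one, Finset.filter_insert, if_pos h,
        Finset.card_insert_of_notMem (fun hmem =>
          absurd (Finset.mem_range.1 (Finset.mem_filter.1 hmem).1) (lt_irrefl k))]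
    · show ((Finset.range (k+1)).filter succ).card = ((Finset.range k).filter succ).card
      rw [Finset.range_add_one, Finset.filter_insert, if_neg h]
  -- Lemma D : formula for δ
  have hδeq : ∀ k, δ k * 2 ^ k = δ 0 * 4 ^ S k := by
    intro k
    induction k with
    | zero => simp [hS0]
    | succ k ih =>
      rcases Classical.em (succ k) with hs | hs
      · rw [(hupd k).1 ((hsucc_iff k).1 hs), (hSstep k).1 hs, pow_succ, pow_succ]
        linarith
      · rw [(hupd k).2 (fun hr => hs ((hsucc_iff k).2 hr)), (hSstep k).2 hs, pow_succ]
        field_simp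
        linarith
  -- Lemma E : decrease
  have hdec : ∀ k, (∀ j, j < k → ε < ‖gradient f (x j)‖) →
      f (x k) ≤ f (x 0) - S k * (η * (ν * ε) ^ 2) := by
    intro k
    induction k with
    | zero => simp [hS0]
    | succ k ih =>
      intro hbig
      have ihk := ih fun j hj => hbig j (Nat.lt_succ_of_lt hj)
      have hδk : ν * ε ≤ δ k := hδlb k fun j hj => hbig j (Nat.lt_succ_of_lt hj)
      rcases Classical.em (succ k) with hs | hs
      · have h1 : f (x (k + 1)) ≤ f (x k) - η * δ k ^ 2 := ((hsucc_iff k).1 hs).2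
        have h2 : (ν * ε) ^ 2 ≤ δ k ^ 2 := pow_le_pow_left₀ hνε.le hδk 2
        have h3 : η * (ν * ε) ^ 2 ≤ η * δ k ^ 2 := mul_le_mul_of_nonneg_left h2 hη.le
        rw [(hSstep k).1 hs]
        push_cast
        linarith
      · rw [(hSstep k).2 hs]
        linarith [hmono k]
  -- pieces for the final bound
  set fstar : ℝ := ⨅ y, f y with hfstar
  have hfs : ∀ k, fstar ≤ f (x k) := fun k => ciInf_le hbdd (x k)
  set c : ℝ := η * (ν * ε) ^ 2 with hc
  have hcpos : 0 < c := by positivity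
  have hSbound : ∀ k, (∀ j, j < k → ε < ‖gradient f (x j)‖) →
      (S k : ℝ) ≤ (f (x 0) - fstar) / c := by
    intro k hbig
    have h1 := hdec k hbig
    have h2 := hfs k
    rw [le_div_iff₀ hcpos]
    linarith
  set B : ℝ := 2 * (f (x 0) - fstar) / c + Real.logb 2 (δ 0 / (ν * ε)) with hB
  -- main bound while gradients large
  have hbound : ∀ k, (∀ j, j < k → ε < ‖gradient f (x j)‖) → (k : ℝ) ≤ B := by
    intro k hbig
    have hδk : ν * ε ≤ δ k := hδlb k hbig
    have hform := hδeq k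
    have hineq : ν * ε * 2 ^ k ≤ δ 0 * 4 ^ S k := by
      calc ν * ε * 2 ^ k ≤ δ k * 2 ^ k := by
            apply mul_le_mul_of_nonneg_right hδk (by positivity)
        _ = δ 0 * 4 ^ S k := hform
      -- done
    have hlog := Real.logb_le_logb_of_le (b := 2) (by norm_num) (by positivity) hineq
    have hl1 : Real.logb 2 (ν * ε * 2 ^ k) = Real.logb 2 (ν * ε) + k := by
      rw [Real.logb_mul (ne_of_gt hνε) (by positivity), Real.logb_pow,
        Real.logb_self_eq_one (by norm_num)]
      ring
    have hl2 : Real.logb 2 (δ 0 * 4 ^ S k) = Real.logb 2 (δ 0) + 2 * S k := by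
      rw [Real.logb_mul (ne_of_gt (hδ 0)) (by positivity), Real.logb_pow]
      have : Real.logb 2 4 = 2 := by
        rw [show (4:ℝ) = 2 ^ (2:ℕ) by norm_num, Real.logb_pow,
          Real.logb_self_eq_one (by norm_num)]
        norm_num
      rw [this]; ring
    rw [hl1, hl2] at hlog
    have hSk := hSbound k hbig
    have hldiv : Real.logb 2 (δ 0 / (ν * ε)) =
        Real.logb 2 (δ 0) - Real.logb 2 (ν * ε) :=
      Real.logb_div (ne_of_gt (hδ 0)) (ne_of_gt hνε)
    rw [hB, hldiv]
    have h2S : 2 * (S k : ℝ) ≤ 2 * ((f (x 0) - fstar) / c) := by linarith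
    rw [mul_div_assoc]
    linarith
  -- existence of an iterate with small gradient
  have hex : ∃ j, ‖gradient f (x j)‖ ≤ ε := by
    by_contra hcon
    push_neg at hcon
    have hN := hbound (Nat.ceil B + 1) (fun j _ => hcon j)
    have : B ≤ (Nat.ceil B : ℝ) := Nat.le_ceil B
    push_cast at hN
    linarith
  set K := Nat.find hex with hK
  refine ⟨K, Nat.find_spec hex, ?_⟩
  have hbig : ∀ j, j < K → ε < ‖gradient f (x j)‖ := by
    intro j hj
    have := Nat.find_min hex hj
    push_neg at this
    exact this
  have hKB : (K : ℝ) ≤ B := hbound K hbig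
  have hlognn : 0 ≤ Real.logb 2 (δ 0 / (ν * ε)) := by
    apply Real.logb_nonneg (by norm_num)
    rw [le_div_iff₀ hνε]
    have := hδlb 0 (by intro j hj; omega)
    linarith
  have hceq : η * ν ^ 2 * ε ^ 2 = c := by rw [hc]; ring
  rw [hceq]
  rw [hB] at hKB
  linarith
end

section
/- Derivative-free OptimIST setup: let f : ℝⁿ → ℝ be differentiable with ∇f Lipschitz continuous on ℝⁿ with constant L ∈ (0,∞) and f bounded below with f_* = inf f; let η > 0, ζ > 0; let {x_k} ⊂ ℝⁿ, {ĝ_k} ⊂ ℝⁿ, {δ_k} ⊂ (0,∞) with f_k = f(x_k), g_k = ∇f(x_k), satisfying for every k ≥ 0: (i) f_{k+1} ≤ f_k; (ii) f_{k+1} ≤ max{f_k − ηδ_k², f(x_k − δ_k ĝ_k/‖ĝ_k‖)}, where ĝ_k/‖ĝ_k‖ is taken to be 0 if ĝ_k = 0; (iii) ‖ĝ_k − g_k‖ ≤ ζδ_k; (iv) δ_{k+1} = 2δ_k if both ‖ĝ_k‖ ≥ ηδ_k and f_{k+1} ≤ f_k − ηδ_k², and δ_{k+1} = δ_k/2 otherwise.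 Suppose in addition that f is convex and every level set {x ∈ ℝⁿ : f(x) ≤ c} is bounded, and that g₀ ≠ 0. Then there exists a constant C > 0 such that for every ε ∈ (0, 1], there exists an index k ≤ C/ε with ‖∇f(x_k)‖ ≤ ε. -/
open Filter Topology

open RealInnerProductSpace

lemma optLineDeriv {E : Type*} [NormedAddCommGroup E] [InnerProductSpace ℝ E] [CompleteSpace E]
    (f : E → ℝ) (hdiff : Differentiable ℝ f) (x v : E) (t : ℝ) :
    HasDerivAt (fun s : ℝ => f (x + s • v)) ⟪gradient f (x + t • v), v⟫ t := by
  have c : HasDerivAt (fun s : ℝ => x + s • v) v t := by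
    simpa using ((hasDerivAt_id t).smul_const v).const_add x
  have hg := (hdiff (x + t • v)).hasGradientAt
  rw [hasGradientAt_iff_hasFDerivAt] at hg
  have := hg.comp_hasDerivAt t c
  simpa [InnerProductSpace.toDual_apply_apply, Function.comp_def] using this

lemma gradCont {E : Type*} [NormedAddCommGroup E] [InnerProductSpace ℝ E] [CompleteSpace E]
    (f : E → ℝ) (L : ℝ) (hL : 0 < L)
    (hlip : ∀ y z, ‖gradient f y - gradient f z‖ ≤ L * ‖y - z‖) :
    Continuous (gradient f) := by
  have : LipschitzWith L.toNNReal (gradient f) := by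
    apply LipschitzWith.of_dist_le_mul
    intro y z
    simpa [dist_eq_norm, Real.coe_toNNReal _ hL.le] using hlip y z
  exact this.continuous

lemma optDescent {E : Type*} [NormedAddCommGroup E] [InnerProductSpace ℝ E] [CompleteSpace E]
    (f : E → ℝ) (hdiff : Differentiable ℝ f) (L : ℝ) (hL : 0 < L)
    (hlip : ∀ y z, ‖gradient f y - gradient f z‖ ≤ L * ‖y - z‖) (x v : E) :
    f (x + v) ≤ f x + ⟪gradient f x, v⟫ + L / 2 * ‖v‖ ^ 2 := by
  have hφ : ∀ t : ℝ, HasDerivAt (fun s : ℝ => f (x + s • v))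
      ⟪gradient f (x + t • v), v⟫ t := optLineDeriv f hdiff x v
  have hcont : Continuous fun t : ℝ => ⟪gradient f (x + t • v), v⟫ := by
    exact (Continuous.inner ((gradCont f L hL hlip).comp (by continuity)) continuous_const)
  have key : f (x + v) - f x = ∫ t in (0:ℝ)..1, ⟪gradient f (x + t • v), v⟫ := by
    have := intervalIntegral.integral_eq_sub_of_hasDerivAt
      (fun t _ => hφ t) (hcont.intervalIntegrable 0 1)
    simpa using this.symm
  have hbound : ∫ t in (0:ℝ)..1, ⟪gradient f (x + t • v), v⟫ ≤
      ∫ t in (0:ℝ)..1, (⟪gradient f x, v⟫ + L * t * ‖v‖ ^ 2) := by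
    apply intervalIntegral.integral_mono_on (by norm_num)
      (hcont.intervalIntegrable 0 1)
      ((by continuity : Continuous fun t : ℝ => ⟪gradient f x, v⟫ + L * t * ‖v‖ ^ 2).intervalIntegrable 0 1)
    intro t ht
    have h1 : ⟪gradient f (x + t • v) - gradient f x, v⟫ ≤ L * t * ‖v‖ ^ 2 := by
      calc ⟪gradient f (x + t • v) - gradient f x, v⟫
          ≤ ‖gradient f (x + t • v) - gradient f x‖ * ‖v‖ := real_inner_le_norm _ _
        _ ≤ (L * ‖(x + t • v) - x‖) * ‖v‖ := by
            gcongr; exact hlip _ _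
        _ = L * t * ‖v‖ ^ 2 := by
            simp [norm_smul, abs_of_nonneg ht.1]; ring
    have := inner_sub_left (𝕜 := ℝ) (gradient f (x + t • v)) (gradient f x) v
    rw [this] at h1
    linarith
  have hval : ∫ t in (0:ℝ)..1, (⟪gradient f x, v⟫ + L * t * ‖v‖ ^ 2)
      = ⟪gradient f x, v⟫ + L / 2 * ‖v‖ ^ 2 := by
    rw [intervalIntegral.integral_add (intervalIntegrable_const) (((by continuity : Continuous fun t : ℝ => L * t * ‖v‖ ^ 2)).intervalIntegrable 0 1)]
    have he : (fun t : ℝ => L * t * ‖v‖ ^ 2) = fun t : ℝ => (L * ‖v‖ ^ 2) * t := by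
      ext t; ring
    rw [he, intervalIntegral.integral_const_mul, integral_id]
    simp; ring
  rw [hval] at hbound
  linarith [key, hbound]

lemma optConvexGrad {E : Type*} [NormedAddCommGroup E] [InnerProductSpace ℝ E] [CompleteSpace E]
    (f : E → ℝ) (hdiff : Differentiable ℝ f) (hconv : ConvexOn ℝ Set.univ f) (x y : E) :
    f x + ⟪gradient f x, y - x⟫ ≤ f y := by
  set φ : ℝ → ℝ := fun s => f (x + s • (y - x)) with hφdef
  have hd : HasDerivAt φ ⟪gradient f x, y - x⟫ 0 := by
    have := optLineDeriv f hdiff x (y - x) 0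
    simpa using this
  have hslope : ∀ t : ℝ, t ∈ Set.Ioc (0:ℝ) 1 → slope φ 0 t ≤ f y - f x := by
    intro t ht
    have hconv2 := hconv.2 (Set.mem_univ x) (Set.mem_univ y)
      (by linarith [ht.1, ht.2] : (0:ℝ) ≤ 1 - t) (le_of_lt ht.1) (by ring)
    have hpt : (1 - t) • x + t • y = x + t • (y - x) := by
      module
    rw [hpt] at hconv2
    have hφt : φ t ≤ (1 - t) * f x + t * f y := by simpa [hφdef, smul_eq_mul] using hconv2
    have hφ0 : φ 0 = f x := by simp [hφdef]
    have h2 : φ t - φ 0 ≤ t * (f y - f x) := by nlinarith [hφt, hφ0]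
    have : slope φ 0 t = (φ t - φ 0) / t := by
      rw [slope_def_field]; ring_nf
    rw [this]
    exact (div_le_iff₀ ht.1).mpr (by linarith [h2])
  have htend : Filter.Tendsto (slope φ 0) (nhdsWithin 0 (Set.Ioi 0)) (nhds ⟪gradient f x, y - x⟫) := by
    have h := hasDerivAt_iff_tendsto_slope.mp hd
    exact h.mono_left (nhdsWithin_mono _ (fun a ha => Set.mem_compl_singleton_iff.mpr (ne_of_gt ha)))
  have : ⟪gradient f x, y - x⟫ ≤ f y - f x := by
    refine le_of_tendsto htend ?_
    filter_upwards [Ioc_mem_nhdsGT_of_mem (by norm_num : (0:ℝ) ∈ Set.Ico (0:ℝ) 1)] with t ht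
    exact hslope t ht
  linarith


set_option maxHeartbeats 2000000 in
/-- Worst-case complexity of the derivative-free OptimIST framework in the convex case:
if `f` is convex with bounded level sets, then there is a constant `C > 0` such that for every
`ε ∈ (0, 1]` some iterate `k ≤ C / ε` satisfies `‖∇f (x k)‖ ≤ ε`. -/
theorem optimist_complexity_convex {n : ℕ}
    (f : EuclideanSpace ℝ (Fin n) → ℝ)
    (hdiff : Differentiable ℝ f)
    (L : ℝ) (hL : 0 < L)
    (hlip : ∀ y z, ‖gradient f y - gradient f z‖ ≤ L * ‖y - z‖)
    (hbdd : BddBelow (Set.range f))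
    (η ζ : ℝ) (hη : 0 < η) (hζ : 0 < ζ)
    (x ghat : ℕ → EuclideanSpace ℝ (Fin n)) (δ : ℕ → ℝ) (hδ : ∀ k, 0 < δ k)
    (hmono : ∀ k, f (x (k + 1)) ≤ f (x k))
    (hsd : ∀ k, f (x (k + 1)) ≤
      max (f (x k) - η * δ k ^ 2) (f (x k - (δ k / ‖ghat k‖) • ghat k)))
    (hacc : ∀ k, ‖ghat k - gradient f (x k)‖ ≤ ζ * δ k)
    (hupd : ∀ k,
      ((η * δ k ≤ ‖ghat k‖ ∧ f (x (k + 1)) ≤ f (x k) - η * δ k ^ 2) → δ (k + 1) = 2 * δ k) ∧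
      (¬(η * δ k ≤ ‖ghat k‖ ∧ f (x (k + 1)) ≤ f (x k) - η * δ k ^ 2) → δ (k + 1) = δ k / 2))
    (hconv : ConvexOn ℝ Set.univ f)
    (hlevel : ∀ c : ℝ, Bornology.IsBounded {y | f y ≤ c})
    (hg0 : gradient f (x 0) ≠ 0) :
    ∃ C : ℝ, 0 < C ∧ ∀ ε : ℝ, 0 < ε → ε ≤ 1 →
      ∃ k : ℕ, (k : ℝ) ≤ C / ε ∧ ‖gradient f (x k)‖ ≤ ε := by
  classical
  set g : ℕ → EuclideanSpace ℝ (Fin n) := fun k => gradient f (x k) with hgdef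
  set fstar : ℝ := sInf (Set.range f) with hfstar
  have hfstar_le : ∀ y, fstar ≤ f y := fun y => csInf_le hbdd ⟨y, rfl⟩
  set Δ : ℕ → ℝ := fun k => f (x k) - fstar with hΔdef
  have hΔnonneg : ∀ k, 0 ≤ Δ k := fun k => by simp [hΔdef, hfstar_le (x k)]
  have hΔmono : ∀ k, Δ (k + 1) ≤ Δ k := fun k => by
    simp only [hΔdef]; linarith [hmono k]
  have hΔle : ∀ j k, j ≤ k → Δ k ≤ Δ j := by
    intro j k hjk
    induction k with
    | zero => simp_all
    | succ k ih =>
      rcases Nat.lt_or_ge j (k+1) with h | h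
      · exact le_trans (hΔmono k) (ih (Nat.lt_succ_iff.mp h))
      · have : j = k + 1 := le_antisymm hjk h
        simp [this]
  set M : ℝ := η + 2 * ζ + L / 2 with hMdef
  have hM : 0 < M := by positivity
  -- diameter of the initial level set
  obtain ⟨R, hR⟩ : ∃ R, ∀ y ∈ {y | f y ≤ f (x 0)}, ‖y‖ ≤ R :=
    Bornology.IsBounded.exists_norm_le (hlevel (f (x 0)))
  have hR0 : 0 ≤ R := le_trans (norm_nonneg _) (hR (x 0) (by simp))
  set D : ℝ := 2 * R + 1 with hDdef
  have hD : 0 < D := by positivity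
  have hxlevel : ∀ k, f (x k) ≤ f (x 0) := by
    intro k
    induction k with
    | zero => exact le_refl _
    | succ k ih => exact le_trans (hmono k) ih
  have hdiam : ∀ (k : ℕ) (y : EuclideanSpace ℝ (Fin n)), f y ≤ f (x 0) → ‖x k - y‖ ≤ D := by
    intro k y hy
    calc ‖x k - y‖ ≤ ‖x k‖ + ‖y‖ := norm_sub_le _ _
      _ ≤ R + R := add_le_add (hR _ (hxlevel k)) (hR _ hy)
      _ ≤ D := by simp [hDdef]; linarith
  -- positivity of the initial gap
  have hΔ0pos : 0 < Δ 0 := by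
    have hdes := optDescent f hdiff L hL hlip (x 0) (-((1 / L) • g 0))
    have h1 : ⟪gradient f (x 0), -((1 / L) • g 0)⟫ = -((1 / L) * ‖g 0‖ ^ 2) := by
      rw [inner_neg_right, real_inner_smul_right, real_inner_self_eq_norm_sq]
    have h2 : ‖-((1 / L) • g 0)‖ ^ 2 = (1 / L) ^ 2 * ‖g 0‖ ^ 2 := by
      rw [norm_neg, norm_smul, Real.norm_eq_abs, abs_of_pos (by positivity : (0:ℝ) < 1 / L)]
      ring
    rw [h1, h2] at hdes
    have h3 : fstar ≤ f (x 0 + -((1 / L) • g 0)) := hfstar_le _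
    have h4 : 0 < ‖g 0‖ ^ 2 := by
      have hne : g 0 ≠ 0 := hg0
      exact pow_pos (norm_pos_iff.mpr hne) 2
    have h5 : L / 2 * ((1 / L) ^ 2 * ‖g 0‖ ^ 2) = 1 / (2 * L) * ‖g 0‖ ^ 2 := by
      field_simp
    rw [h5] at hdes
    have h6 : 0 < 1 / (2 * L) * ‖g 0‖ ^ 2 := by positivity
    have h7 : 1 / L * ‖g 0‖ ^ 2 - 1 / (2 * L) * ‖g 0‖ ^ 2 = 1 / (2 * L) * ‖g 0‖ ^ 2 := by
      field_simp; ring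
    simp only [hΔdef]
    nlinarith [hdes, h3]
  -- the gap bound from convexity
  have hgap : ∀ k, Δ k ≤ D * ‖g k‖ := by
    intro k
    refine le_of_forall_pos_le_add ?_
    intro θ hθ
    set θ' : ℝ := min θ (Δ 0) with hθ'def
    have hθ' : 0 < θ' := lt_min hθ hΔ0pos
    obtain ⟨a, ⟨y, rfl⟩, hy⟩ : ∃ a ∈ Set.range f, a < fstar + θ' :=
      exists_lt_of_csInf_lt (Set.range_nonempty f) (by linarith)
    have hylevel : f y ≤ f (x 0) := by
      have : θ' ≤ Δ 0 := min_le_right _ _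
      simp only [hΔdef] at this
      linarith
    have hcg := optConvexGrad f hdiff hconv (x k) y
    have hip : ⟪gradient f (x k), y - x k⟫ = -⟪g k, x k - y⟫ := by
      rw [← inner_neg_right]
      congr 1
      abel
    rw [hip] at hcg
    have hcs : ⟪g k, x k - y⟫ ≤ ‖g k‖ * ‖x k - y‖ := real_inner_le_norm _ _
    have hd := hdiam k y hylevel
    have : ‖g k‖ * ‖x k - y‖ ≤ ‖g k‖ * D := by
      exact mul_le_mul_of_nonneg_left hd (norm_nonneg _)
    simp only [hΔdef]
    have hθθ : θ' ≤ θ := min_le_left _ _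
    nlinarith
  -- success predicate
  set P : ℕ → Prop := fun k => η * δ k ≤ ‖ghat k‖ ∧ f (x (k + 1)) ≤ f (x k) - η * δ k ^ 2
    with hPdef
  have hguar : ∀ k, M * δ k ≤ ‖g k‖ → P k := by
    intro k hk
    have hdk := hδ k
    have h1 : ‖g k‖ - ‖ghat k‖ ≤ ‖ghat k - g k‖ := by
      rw [norm_sub_rev]
      exact norm_sub_norm_le _ _
    have h2 : (η + ζ + L / 2) * δ k ≤ ‖ghat k‖ := by
      have := hacc k
      simp only [hMdef] at hk
      have : ‖ghat k - g k‖ ≤ ζ * δ k := hacc k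
      nlinarith
    have hghat_pos : 0 < ‖ghat k‖ := by nlinarith
    have hghat_ne : ghat k ≠ 0 := norm_pos_iff.mp hghat_pos
    constructor
    · nlinarith
    · -- descent step
      have hdes := optDescent f hdiff L hL hlip (x k) (-((δ k / ‖ghat k‖) • ghat k))
      have hnorm : ‖-((δ k / ‖ghat k‖) • ghat k)‖ = δ k := by
        rw [norm_neg, norm_smul, Real.norm_eq_abs,
          abs_of_pos (div_pos hdk hghat_pos)]
        field_simp
      have hinner1 : ⟪ghat k - g k, ghat k⟫ ≤ ζ * δ k * ‖ghat k‖ := by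
        calc ⟪ghat k - g k, ghat k⟫ ≤ ‖ghat k - g k‖ * ‖ghat k‖ := real_inner_le_norm _ _
          _ ≤ ζ * δ k * ‖ghat k‖ := by
              exact mul_le_mul_of_nonneg_right (hacc k) (norm_nonneg _)
      have hinner2 : ‖ghat k‖ ^ 2 - ζ * δ k * ‖ghat k‖ ≤ ⟪g k, ghat k⟫ := by
        have := inner_sub_left (𝕜 := ℝ) (ghat k) (g k) (ghat k)
        rw [real_inner_self_eq_norm_sq] at this
        linarith [hinner1, this.symm.le, this.le]
      have hip : ⟪gradient f (x k), -((δ k / ‖ghat k‖) • ghat k)⟫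
          = -(δ k / ‖ghat k‖ * ⟪g k, ghat k⟫) := by
        rw [inner_neg_right, real_inner_smul_right]
      rw [hip, hnorm] at hdes
      have hfx : x k + -((δ k / ‖ghat k‖) • ghat k) = x k - (δ k / ‖ghat k‖) • ghat k := by
        abel
      rw [hfx] at hdes
      have hstep : f (x k - (δ k / ‖ghat k‖) • ghat k) ≤ f (x k) - η * δ k ^ 2 := by
        have hfrac : δ k / ‖ghat k‖ * ⟪g k, ghat k⟫
            ≥ δ k / ‖ghat k‖ * (‖ghat k‖ ^ 2 - ζ * δ k * ‖ghat k‖) := by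
          exact mul_le_mul_of_nonneg_left hinner2 (le_of_lt (div_pos hdk hghat_pos))
        have hsimp : δ k / ‖ghat k‖ * (‖ghat k‖ ^ 2 - ζ * δ k * ‖ghat k‖)
            = δ k * ‖ghat k‖ - ζ * δ k ^ 2 := by
          field_simp
        rw [hsimp] at hfrac
        have : δ k * ((η + ζ + L / 2) * δ k) ≤ δ k * ‖ghat k‖ :=
          mul_le_mul_of_nonneg_left h2 hdk.le
        nlinarith [hdes]
      exact (hsd k).trans (max_le (le_refl _) hstep)

  have hfail : ∀ k, ¬ P k → ‖g k‖ < M * δ k := by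
    intro k hk
    by_contra h
    exact hk (hguar k (not_lt.mp h))
  have hup : ∀ k, P k → δ (k + 1) = 2 * δ k := fun k => (hupd k).1
  have hdown : ∀ k, ¬ P k → δ (k + 1) = δ k / 2 := fun k => (hupd k).2
  -- invariant I1
  have I1 : ∀ k, min (δ 0) (Δ k / (2 * M * D)) ≤ δ k := by
    intro k
    induction k with
    | zero => exact min_le_left _ _
    | succ k ih =>
      by_cases hk : P k
      · have h2 : δ (k + 1) = 2 * δ k := hup k hk
        have hmin : min (δ 0) (Δ (k + 1) / (2 * M * D)) ≤ min (δ 0) (Δ k / (2 * M * D)) := by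
          apply min_le_min (le_refl _)
          apply div_le_div_of_nonneg_right (hΔmono k)
          positivity
        rw [h2]
        linarith [hmin.trans ih, hδ k]
      · have h2 : δ (k + 1) = δ k / 2 := hdown k hk
        have h3 : ‖g k‖ < M * δ k := hfail k hk
        have h4 : Δ (k + 1) ≤ Δ k := hΔmono k
        have h5 : Δ k ≤ D * ‖g k‖ := hgap k
        have h6 : Δ (k + 1) / (2 * M * D) < δ k / 2 := by
          rw [div_lt_div_iff₀ (by positivity) (by norm_num)]
          nlinarith
        rw [h2]
        exact le_of_lt (lt_of_le_of_lt (min_le_right _ _) h6)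
  -- the per-k success decrease
  have hdec : ∀ k, P k → η * δ k ^ 2 ≤ Δ k - Δ (k + 1) := by
    intro k hk
    simp only [hΔdef]
    linarith [hk.2]
  -- constants
  set γ1 : ℝ := η / (16 * M ^ 2 * D ^ 2) with hγ1def
  set μ : ℝ := min (δ 0) (1 / (2 * M)) with hμdef
  have hμ : 0 < μ := lt_min (hδ 0) (by positivity)
  set γ2 : ℝ := η * μ ^ 2 / (4 * D ^ 2) with hγ2def
  set γ : ℝ := min γ1 γ2 with hγdef
  have hγ : 0 < γ := lt_min (by positivity) (by positivity)
  set C : ℝ := 2 * Δ 0 / (η * δ 0 ^ 2) + 2 / (γ * D) + δ 0 / μ + 1 with hCdef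
  have hC : 0 < C := by
    have h1 : 0 ≤ 2 * Δ 0 / (η * δ 0 ^ 2) :=
      div_nonneg (by linarith [hΔnonneg 0]) (by positivity)
    have h2 : 0 < 2 / (γ * D) := by positivity
    have h3 : 0 < δ 0 / μ := div_pos (hδ 0) hμ
    simp only [hCdef]
    linarith
  refine ⟨C, hC, ?_⟩
  intro ε hε hε1
  -- main counting bound
  have key : ∀ N : ℕ, (∀ k, k < N → ε < ‖g k‖) → (N : ℝ) ≤ C / ε := by
    intro N hgN
    set m : ℝ := min (δ 0) (ε / (2 * M)) with hmdef
    have hm : 0 < m := lt_min (hδ 0) (by positivity)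
    have hεμ : ε * μ ≤ m := by
      apply le_min
      · calc ε * μ ≤ ε * δ 0 := mul_le_mul_of_nonneg_left (min_le_left _ _) hε.le
          _ ≤ 1 * δ 0 := mul_le_mul_of_nonneg_right hε1 (hδ 0).le
          _ = δ 0 := one_mul _
      · calc ε * μ ≤ ε * (1 / (2 * M)) := mul_le_mul_of_nonneg_left (min_le_right _ _) hε.le
          _ = ε / (2 * M) := by ring
    have I2 : ∀ k, k ≤ N → m ≤ δ k := by
      intro k
      induction k with
      | zero => intro _; exact min_le_left _ _
      | succ k ih =>
        intro hkN
        have hkN' : k < N := Nat.lt_of_succ_le hkN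
        by_cases hk : P k
        · rw [hup k hk]
          linarith [ih (le_of_lt hkN'), hδ k]
        · rw [hdown k hk]
          have h3 : ‖g k‖ < M * δ k := hfail k hk
          have h4 : ε < ‖g k‖ := hgN k hkN'
          have : ε / (2 * M) < δ k / 2 := by
            rw [div_lt_div_iff₀ (by positivity) (by norm_num)]
            nlinarith
          linarith [min_le_right (δ 0) (ε / (2 * M))]
    set ψ : ℕ → ℝ := fun k => 1 / (Δ k + D * ε) with hψdef
    have hψb : ∀ k, 0 < Δ k + D * ε := fun k => by
      have := hΔnonneg k; positivity
    have hψmono : ∀ k, ψ k ≤ ψ (k + 1) := fun k =>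
      one_div_le_one_div_of_le (hψb (k + 1)) (by linarith [hΔmono k])
    set B : ℝ := 2 * M * D * δ 0 with hBdef
    set A : Finset ℕ := (Finset.range N).filter (fun k => P k ∧ B < Δ k) with hAdef
    set Bc : Finset ℕ := (Finset.range N).filter (fun k => P k ∧ Δ k ≤ B) with hBcdef
    set S : Finset ℕ := (Finset.range N).filter (fun k => P k) with hSdef
    have hMD : (0:ℝ) < 2 * M * D := by positivity
    have hAcard : (A.card : ℝ) * (η * δ 0 ^ 2) ≤ Δ 0 := by
      have hsum : A.card • (η * δ 0 ^ 2) ≤ ∑ k ∈ A, (Δ k - Δ (k + 1)) := by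
        apply Finset.card_nsmul_le_sum
        intro k hk
        simp only [hAdef, Finset.mem_filter, Finset.mem_range] at hk
        obtain ⟨hkN, hkP, hkB⟩ := hk
        have hδk : δ 0 ≤ δ k := by
          have h1 := I1 k
          have h2 : δ 0 ≤ Δ k / (2 * M * D) := by
            rw [le_div_iff₀ hMD]
            simp only [hBdef] at hkB
            nlinarith
          calc δ 0 = min (δ 0) (Δ k / (2 * M * D)) := (min_eq_left h2).symm
            _ ≤ δ k := h1
        have hd := hdec k hkP
        have hsq : δ 0 ^ 2 ≤ δ k ^ 2 := pow_le_pow_left₀ (hδ 0).le hδk 2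
        have := mul_le_mul_of_nonneg_left hsq hη.le
        linarith
      have hsub : ∑ k ∈ A, (Δ k - Δ (k + 1)) ≤ ∑ k ∈ Finset.range N, (Δ k - Δ (k + 1)) := by
        apply Finset.sum_le_sum_of_subset_of_nonneg (Finset.filter_subset _ _)
        intro k _ _
        linarith [hΔmono k]
      rw [Finset.sum_range_sub' (fun k => Δ k)] at hsub
      have hn := hΔnonneg N
      have hns : A.card • (η * δ 0 ^ 2) = (A.card : ℝ) * (η * δ 0 ^ 2) := nsmul_eq_mul _ _
      rw [hns] at hsum
      linarith
    have hBccard : (Bc.card : ℝ) * γ ≤ 1 / (D * ε) := by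
      have hsum : Bc.card • γ ≤ ∑ k ∈ Bc, (ψ (k + 1) - ψ k) := by
        apply Finset.card_nsmul_le_sum
        intro k hk
        simp only [hBcdef, Finset.mem_filter, Finset.mem_range] at hk
        obtain ⟨hkN, hkP, hkB⟩ := hk
        have hδm : m ≤ δ k := I2 k (le_of_lt hkN)
        have hδΔ : Δ k / (2 * M * D) ≤ δ k := by
          have h1 := I1 k
          have h2 : Δ k / (2 * M * D) ≤ δ 0 := by
            rw [div_le_iff₀ hMD]
            simp only [hBdef] at hkB
            nlinarith
          calc Δ k / (2 * M * D) = min (δ 0) (Δ k / (2 * M * D)) := (min_eq_right h2).symm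
            _ ≤ δ k := h1
        have ha : 0 < Δ (k + 1) + D * ε := hψb (k + 1)
        have hb : 0 < Δ k + D * ε := hψb k
        have hab : Δ (k + 1) + D * ε ≤ Δ k + D * ε := by linarith [hΔmono k]
        have hba : η * δ k ^ 2 ≤ (Δ k + D * ε) - (Δ (k + 1) + D * ε) := by
          have := hdec k hkP
          linarith
        have heq : ψ (k + 1) - ψ k
            = ((Δ k + D * ε) - (Δ (k + 1) + D * ε)) / ((Δ (k + 1) + D * ε) * (Δ k + D * ε)) := by
          simp only [hψdef]
          field_simp
        rw [heq, le_div_iff₀ (mul_pos ha hb)]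
        have hδk0 : 0 ≤ δ k := (hδ k).le
        rcases le_or_gt (D * ε) (Δ k) with hcase | hcase
        · -- moderate gap regime
          have hγ1 : γ ≤ γ1 := min_le_left _ _
          have hbb : Δ k + D * ε ≤ 2 * Δ k := by linarith
          have haa : Δ (k + 1) + D * ε ≤ 2 * Δ k := le_trans hab hbb
          have hΔpos : 0 < Δ k := lt_of_lt_of_le (by positivity) hcase
          have hsq : Δ k / (2 * M * D) * (Δ k / (2 * M * D)) ≤ δ k * δ k := by
            have h0 : 0 ≤ Δ k / (2 * M * D) := div_nonneg (hΔnonneg k) hMD.le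
            nlinarith
          have hM' : M ≠ 0 := ne_of_gt hM
          have hD' : D ≠ 0 := ne_of_gt hD
          have hkey : γ1 * (2 * Δ k * (2 * Δ k)) = η * (Δ k / (2 * M * D) * (Δ k / (2 * M * D))) := by
            rw [hγ1def]
            field_simp
            ring
          have hprod : (Δ (k + 1) + D * ε) * (Δ k + D * ε) ≤ 2 * Δ k * (2 * Δ k) :=
            mul_le_mul haa hbb hb.le (by linarith)
          have hγ1nn : 0 ≤ γ1 := le_trans hγ.le hγ1
          calc γ * ((Δ (k + 1) + D * ε) * (Δ k + D * ε))
              ≤ γ1 * (2 * Δ k * (2 * Δ k)) :=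
                mul_le_mul hγ1 hprod (mul_pos ha hb).le hγ1nn
            _ = η * (Δ k / (2 * M * D) * (Δ k / (2 * M * D))) := hkey
            _ ≤ η * (δ k * δ k) := mul_le_mul_of_nonneg_left hsq hη.le
            _ ≤ (Δ k + D * ε) - (Δ (k + 1) + D * ε) := by
                have : δ k * δ k = δ k ^ 2 := (pow_two _).symm
                rw [this]
                exact hba
        · -- small gap regime
          have hγ2 : γ ≤ γ2 := min_le_right _ _
          have hbb : Δ k + D * ε ≤ 2 * (D * ε) := by linarith
          have haa : Δ (k + 1) + D * ε ≤ 2 * (D * ε) := le_trans hab hbb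
          have hεμm : ε * μ ≤ δ k := le_trans hεμ hδm
          have hD' : D ≠ 0 := ne_of_gt hD
          have hkey : γ2 * (2 * (D * ε) * (2 * (D * ε))) = η * ((ε * μ) * (ε * μ)) * (D * D) / (D * D) * 1 := by
            rw [hγ2def]
            field_simp
            ring
          have hDε : (0:ℝ) < D * ε := by positivity
          have hprod : (Δ (k + 1) + D * ε) * (Δ k + D * ε) ≤ 2 * (D * ε) * (2 * (D * ε)) :=
            mul_le_mul haa hbb hb.le (by linarith)
          have hγ2nn : 0 ≤ γ2 := le_trans hγ.le hγ2
          have hkey' : γ2 * (2 * (D * ε) * (2 * (D * ε))) = η * ((ε * μ) * (ε * μ)) := by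
            rw [hkey]
            field_simp
          have hεμsq : (ε * μ) * (ε * μ) ≤ δ k * δ k :=
            mul_le_mul hεμm hεμm (mul_pos hε hμ).le (hδ k).le
          calc γ * ((Δ (k + 1) + D * ε) * (Δ k + D * ε))
              ≤ γ2 * (2 * (D * ε) * (2 * (D * ε))) :=
                mul_le_mul hγ2 hprod (mul_pos ha hb).le hγ2nn
            _ = η * ((ε * μ) * (ε * μ)) := hkey'
            _ ≤ η * (δ k * δ k) := mul_le_mul_of_nonneg_left hεμsq hη.le
            _ ≤ (Δ k + D * ε) - (Δ (k + 1) + D * ε) := by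
                have : δ k * δ k = δ k ^ 2 := (pow_two _).symm
                rw [this]
                exact hba
      have hsub : ∑ k ∈ Bc, (ψ (k + 1) - ψ k) ≤ ∑ k ∈ Finset.range N, (ψ (k + 1) - ψ k) := by
        apply Finset.sum_le_sum_of_subset_of_nonneg (Finset.filter_subset _ _)
        intro k _ _
        linarith [hψmono k]
      rw [Finset.sum_range_sub (fun k => ψ k)] at hsub
      have hψN : ψ N ≤ 1 / (D * ε) := by
        apply one_div_le_one_div_of_le (by positivity)
        linarith [hΔnonneg N]
      have hψ0 : 0 < ψ 0 := by
        simp only [hψdef]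
        positivity
      have hns : Bc.card • γ = (Bc.card : ℝ) * γ := nsmul_eq_mul _ _
      rw [hns] at hsum
      linarith
    have hScard : S.card ≤ A.card + Bc.card := by
      refine le_trans (Finset.card_le_card ?_) (Finset.card_union_le A Bc)
      intro k hk
      simp only [hSdef, hAdef, hBcdef, Finset.mem_filter, Finset.mem_union] at hk ⊢
      rcases le_or_gt (Δ k) B with h | h
      · exact Or.inr ⟨hk.1, hk.2, h⟩
      · exact Or.inl ⟨hk.1, hk.2, h⟩
    have hSleN : S.card ≤ N := by
      simpa [hSdef] using Finset.card_filter_le (Finset.range N) _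
    have hF : ((N - S.card : ℕ) : ℝ) ≤ (S.card : ℝ) + (δ 0 / μ) / ε := by
      have I3 : ∀ k, (2:ℝ) ^ (k - ((Finset.range k).filter (fun j => P j)).card)
          * δ k = 2 ^ (((Finset.range k).filter (fun j => P j)).card) * δ 0 := by
        intro k
        induction k with
        | zero => simp
        | succ k ih =>
          have hle : ((Finset.range k).filter (fun j => P j)).card ≤ k := by
            calc ((Finset.range k).filter (fun j => P j)).card
                ≤ (Finset.range k).card := Finset.card_filter_le _ _
              _ = k := Finset.card_range k
          by_cases hk : P k
          · have hcard : ((Finset.range (k+1)).filter (fun j => P j)).card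
                = ((Finset.range k).filter (fun j => P j)).card + 1 := by
              rw [Finset.range_add_one, Finset.filter_insert, if_pos hk,
                Finset.card_insert_of_notMem (by simp)]
            have he : k + 1 - (((Finset.range k).filter (fun j => P j)).card + 1)
                = k - ((Finset.range k).filter (fun j => P j)).card := by omega
            rw [hcard, hup k hk, he]
            calc (2:ℝ) ^ (k - ((Finset.range k).filter (fun j => P j)).card) * (2 * δ k)
                = 2 * ((2:ℝ) ^ (k - ((Finset.range k).filter (fun j => P j)).card) * δ k) := by
                  ring
              _ = 2 * ((2:ℝ) ^ (((Finset.range k).filter (fun j => P j)).card) * δ 0) := by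
                  rw [ih]
              _ = (2:ℝ) ^ (((Finset.range k).filter (fun j => P j)).card + 1) * δ 0 := by
                  rw [pow_succ]; ring
          · have hcard : ((Finset.range (k+1)).filter (fun j => P j)).card
                = ((Finset.range k).filter (fun j => P j)).card := by
              rw [Finset.range_add_one, Finset.filter_insert, if_neg hk]
            have he : k + 1 - ((Finset.range k).filter (fun j => P j)).card
                = (k - ((Finset.range k).filter (fun j => P j)).card) + 1 := by omega
            rw [hcard, hdown k hk, he]
            calc (2:ℝ) ^ ((k - ((Finset.range k).filter (fun j => P j)).card) + 1) * (δ k / 2)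
                = (2:ℝ) ^ (k - ((Finset.range k).filter (fun j => P j)).card) * δ k := by
                  rw [pow_succ]; ring
              _ = _ := ih
      have hI3 : (2:ℝ) ^ (N - S.card) * δ N = 2 ^ S.card * δ 0 := by
        simpa [hSdef] using I3 N
      have hδN : ε * μ ≤ δ N := le_trans hεμ (I2 N le_rfl)
      rcases le_or_gt (N - S.card) S.card with h | h
      · have h' : ((N - S.card : ℕ):ℝ) ≤ (S.card : ℝ) := by exact_mod_cast h
        have : (0:ℝ) ≤ (δ 0 / μ) / ε := div_nonneg (div_nonneg (hδ 0).le hμ.le) hε.le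
        linarith
      · have ht : N - S.card = S.card + (N - S.card - S.card) := by omega
        set t : ℕ := N - S.card - S.card with htdef
        rw [ht, pow_add] at hI3
        have hpS : (0:ℝ) < 2 ^ S.card := by positivity
        have hcancel : (2:ℝ) ^ t * δ N = δ 0 := by
          have := hI3
          field_simp at this
          nlinarith [this, hpS]
        have h2t : (2:ℝ) ^ t * (ε * μ) ≤ δ 0 := by
          calc (2:ℝ) ^ t * (ε * μ) ≤ (2:ℝ) ^ t * δ N :=
              mul_le_mul_of_nonneg_left hδN (by positivity)
            _ = δ 0 := hcancel
        have htle : (t:ℝ) ≤ δ 0 / (ε * μ) := by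
          have h1 : (t:ℝ) < (2:ℝ) ^ t := by
            have := Nat.lt_two_pow_self (n := t)
            exact_mod_cast this
          have h2 : (2:ℝ) ^ t ≤ δ 0 / (ε * μ) := by
            rw [le_div_iff₀ (mul_pos hε hμ)]
            exact h2t
          linarith
        have heq : δ 0 / (ε * μ) = (δ 0 / μ) / ε := by
          rw [div_div]
          ring_nf
        rw [heq] at htle
        have hcast : ((N - S.card : ℕ):ℝ) = (S.card : ℝ) + (t:ℝ) := by
          rw [ht]
          push_cast
          ring
        rw [hcast]
        linarith
    have hAbound : (A.card : ℝ) ≤ Δ 0 / (η * δ 0 ^ 2) := by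
      rw [le_div_iff₀ (mul_pos hη (pow_pos (hδ 0) 2))]
      exact hAcard
    have hBcbound : (Bc.card : ℝ) ≤ (1 / (γ * D)) / ε := by
      have := hBccard
      rw [← le_div_iff₀ hγ] at this
      calc (Bc.card : ℝ) ≤ 1 / (D * ε) / γ := this
        _ = (1 / (γ * D)) / ε := by field_simp
    have hNsplit : (N : ℝ) = (S.card : ℝ) + ((N - S.card : ℕ) : ℝ) := by
      push_cast [Nat.cast_sub hSleN]
      ring
    have hSr : (S.card : ℝ) ≤ (A.card : ℝ) + (Bc.card : ℝ) := by exact_mod_cast hScard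
    have hinv : (1 : ℝ) ≤ 1 / ε := by
      rw [le_div_iff₀ hε]; linarith
    have ha1 : 0 ≤ Δ 0 / (η * δ 0 ^ 2) := div_nonneg (hΔnonneg 0) (le_of_lt (mul_pos hη (pow_pos (hδ 0) 2)))
    have t1 : 2 * (Δ 0 / (η * δ 0 ^ 2)) ≤ 2 * (Δ 0 / (η * δ 0 ^ 2)) / ε := by
      rw [div_eq_mul_one_div (2 * (Δ 0 / (η * δ 0 ^ 2))) ε]
      nlinarith [hinv, ha1]
    have hFr : ((N - S.card : ℕ) : ℝ) ≤ (A.card : ℝ) + (Bc.card : ℝ) + (δ 0 / μ) / ε := by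
      refine hF.trans ?_
      linarith [hSr]
    have hsum : (N : ℝ) ≤ 2 * (Δ 0 / (η * δ 0 ^ 2)) + (2 * (1 / (γ * D))) / ε + (δ 0 / μ) / ε := by
      rw [hNsplit]
      have : (2 * (1 / (γ * D))) / ε = 2 * ((1 / (γ * D)) / ε) := by ring
      rw [this]
      linarith [hSr, hFr, hAbound, hBcbound]
    have hfinal : (N : ℝ) ≤ C / ε := by
      have hCge : 2 * (Δ 0 / (η * δ 0 ^ 2)) / ε + (2 * (1 / (γ * D))) / ε + (δ 0 / μ) / ε ≤ C / ε := by
        rw [← add_div, ← add_div]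
        apply div_le_div_of_nonneg_right ?_ ?_
        · simp only [hCdef]
          have : 2 * (1 / (γ * D)) = 2 / (γ * D) := by ring
          rw [this]
          have h2 : 2 * (Δ 0 / (η * δ 0 ^ 2)) = 2 * Δ 0 / (η * δ 0 ^ 2) := by ring
          rw [h2]
          linarith
        · exact hε.le
      linarith [hsum, t1, hCge]
    exact hfinal
  by_contra hcon
  push_neg at hcon
  have hCε : 0 ≤ C / ε := by positivity
  have hN := key (⌊C / ε⌋₊ + 1) (fun k hk => hcon k (by
    have : (k : ℝ) ≤ (⌊C / ε⌋₊ : ℝ) := by exact_mod_cast Nat.lt_succ_iff.mp hk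
    exact this.trans (Nat.floor_le hCε)))
  have := Nat.lt_floor_add_one (C / ε)
  push_cast at hN
  linarith
end

section
/- Derivative-free OptimIST setup: let f : ℝⁿ → ℝ be differentiable with ∇f Lipschitz continuous on ℝⁿ with constant L ∈ (0,∞) and f bounded below with f_* = inf f; let η > 0, ζ > 0; let {x_k} ⊂ ℝⁿ, {ĝ_k} ⊂ ℝⁿ, {δ_k} ⊂ (0,∞) with f_k = f(x_k), g_k = ∇f(x_k), satisfying for every k ≥ 0: (i) f_{k+1} ≤ f_k; (ii) f_{k+1} ≤ max{f_k − ηδ_k², f(x_k − δ_k ĝ_k/‖ĝ_k‖)}, where ĝ_k/‖ĝ_k‖ is taken to be 0 if ĝ_k = 0; (iii) ‖ĝ_k − g_k‖ ≤ ζδ_k; (iv) δ_{k+1} = 2δ_k if both ‖ĝ_k‖ ≥ ηδ_k and f_{k+1} ≤ f_k − ηδ_k², and δ_{k+1} = δ_k/2 otherwise. Suppose in addition that f is σ-strongly convex for some σ > 0 (i.e., x ↦ f(x) − (σ/2)‖x‖² is convex), and that g₀ ≠ 0. Then there exists a constant C > 0 such that for every ε ∈ (0, 1], there exists an index k ≤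 C(1 + log(1/ε)) with ‖∇f(x_k)‖ ≤ ε. -/
open Filter Topology Finset
set_option maxHeartbeats 1000000


lemma optimist_core (F d G : ℕ → ℝ) (P : ℕ → Prop)
    (η M Λ c₂ : ℝ) (hη : 0 < η) (hM : 0 < M) (hΛ : 0 < Λ) (hc₂ : 0 < c₂)
    (hdpos : ∀ k, 0 < d k) (hF0 : 0 < F 0) (hFnn : ∀ k, 0 ≤ F k)
    (hFmono : ∀ k, F (k+1) ≤ F k)
    (hG : ∀ k, G k ^ 2 ≤ c₂ * F k)
    (hsucc : ∀ k, P k → d (k+1) = 2 * d k ∧ F (k+1) ≤ F k - η * d k ^ 2)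
    (hfail : ∀ k, ¬ P k → d (k+1) = d k / 2 ∧ G k ≤ Λ * d k ∧ F k ≤ M * d k ^ 2) :
    ∃ C : ℝ, 0 < C ∧ ∀ ε : ℝ, 0 < ε → ε ≤ 1 →
      ∃ k : ℕ, (k : ℝ) ≤ C * (1 + Real.log (1/ε)) ∧ G k ≤ ε := by
  classical
  -- F is bounded by F 0
  have hFle0 : ∀ k, F k ≤ F 0 := by
    intro k; induction k with
    | zero => exact le_refl _
    | succ k ih => exact (hFmono k).trans ih
  -- d is bounded above
  set B : ℝ := max (d 0) (2 * Real.sqrt (F 0 / η)) with hBdef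
  have hdB : ∀ k, d k ≤ B := by
    intro k; induction k with
    | zero => exact le_max_left _ _
    | succ k ih =>
      by_cases hP : P k
      · have h1 := (hsucc k hP).1
        have h2 := (hsucc k hP).2
        have hdk2 : d k ^ 2 ≤ F 0 / η := by
          rw [le_div_iff₀ hη]
          nlinarith [hFnn (k+1), hFle0 k]
        have : d k ≤ Real.sqrt (F 0 / η) := by
          rw [show d k = Real.sqrt (d k ^ 2) by
            rw [Real.sqrt_sq (hdpos k).le]]
          exact Real.sqrt_le_sqrt hdk2
        rw [h1]
        calc 2 * d k ≤ 2 * Real.sqrt (F 0 / η) := by linarith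
          _ ≤ B := le_max_right _ _
      · have h1 := (hfail k hP).1
        rw [h1]; linarith [hdpos k, ih]
  set Q : ℕ → Prop := fun k => F k ≤ 4 * M * d k ^ 2 with hQdef
  have habs : ∀ k, Q k → Q (k+1) := by
    intro k hQ
    by_cases hP : P k
    · have h1 := (hsucc k hP).1
      simp only [hQdef] at *
      rw [h1]
      nlinarith [hFmono k, sq_nonneg (d k)]
    · have h1 := (hfail k hP).1
      simp only [hQdef]
      rw [h1]
      nlinarith [hFmono k, (hfail k hP).2.2]
  have hfailQ : ∀ k, ¬ P k → Q (k+1) := by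
    intro k hP
    have h1 := (hfail k hP).1
    simp only [hQdef]
    rw [h1]
    nlinarith [hFmono k, (hfail k hP).2.2]
  have hQall : ∀ j k, j < k → ¬ P j → Q k := by
    intro j k hjk hP
    induction k with
    | zero => omega
    | succ k ih =>
      rcases Nat.lt_succ_iff_lt_or_eq.mp hjk with h | h
      · exact habs k (ih h)
      · subst h; exact hfailQ j hP
  have hnoQ : ∀ k, ¬ Q k → ∀ j, j < k → P j := by
    intro k hk j hj
    by_contra hP
    exact hk (hQall j k hj hP)
  have hprefix : ∀ k, (∀ j, j < k → P j) → d k = 2 ^ k * d 0 := by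
    intro k
    induction k with
    | zero => intro _; simp
    | succ k ih =>
      intro h
      have h1 := (hsucc k (h k (Nat.lt_succ_self k))).1
      rw [h1, ih (fun j hj => h j (hj.trans (Nat.lt_succ_self k)))]
      ring
  set ρ : ℝ := max (1 - η/(4*M)) (1/2) with hρdef
  have hρ0 : 0 < ρ := lt_of_lt_of_le (by norm_num) (le_max_right _ _)
  have hρ1 : ρ < 1 := by
    apply max_lt _ (by norm_num)
    have : 0 < η/(4*M) := div_pos hη (by linarith)
    linarith
  have hdecQ : ∀ k, P k → Q k → F (k+1) ≤ ρ * F k := by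
    intro k hP hQ
    have h2 := (hsucc k hP).2
    simp only [hQdef] at hQ
    have h3 : 1 - η/(4*M) ≤ ρ := le_max_left _ _
    have h4 : F k / (4*M) ≤ d k ^ 2 := by
      rw [div_le_iff₀ (by linarith)]; nlinarith
    have h5 : F (k+1) ≤ (1 - η/(4*M)) * F k := by
      have : η * (F k / (4*M)) ≤ η * d k ^ 2 := by
        apply mul_le_mul_of_nonneg_left h4 hη.le
      have hexp : (1 - η/(4*M)) * F k = F k - η * (F k/(4*M)) := by ring
      rw [hexp]; linarith
    calc F (k+1) ≤ (1 - η/(4*M)) * F k := h5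
      _ ≤ ρ * F k := mul_le_mul_of_nonneg_right h3 (hFnn k)
  set s2 : ℕ → ℕ := fun N => ((range N).filter (fun j => P j ∧ Q j)).card with hs2def
  have hFs2 : ∀ N, F N ≤ F 0 * ρ ^ (s2 N) := by
    intro N
    induction N with
    | zero => simp [hs2def]
    | succ N ih =>
      have hcard : s2 (N+1) = s2 N + (if P N ∧ Q N then 1 else 0) := by
        simp only [hs2def, range_add_one, filter_insert]
        by_cases h : P N ∧ Q N
        · simp [h, card_insert_of_notMem (fun hc => (mem_range.mp (mem_of_mem_filter N hc)).false)]
        · simp [h]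
      by_cases h : P N ∧ Q N
      · rw [hcard, if_pos h, pow_succ]
        calc F (N+1) ≤ ρ * F N := hdecQ N h.1 h.2
          _ ≤ ρ * (F 0 * ρ ^ (s2 N)) := mul_le_mul_of_nonneg_left ih hρ0.le
          _ = F 0 * (ρ ^ (s2 N) * ρ) := by ring
      · rw [hcard, if_neg h]
        exact (hFmono N).trans ih
  have hlogd : ∀ N, Real.log (d N) =
      Real.log (d 0) + (2 * (((range N).filter P).card : ℝ) - N) * Real.log 2 := by
    intro N
    induction N with
    | zero => simp
    | succ N ih =>
      have hcard : ((range (N+1)).filter P).card = ((range N).filter P).card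
          + (if P N then 1 else 0) := by
        rw [range_add_one, filter_insert]
        by_cases h : P N
        · simp [h, card_insert_of_notMem (fun hc => (mem_range.mp (mem_of_mem_filter N hc)).false)]
        · simp [h]
      by_cases h : P N
      · rw [(hsucc N h).1, Real.log_mul two_ne_zero (hdpos N).ne', ih, hcard, if_pos h]
        push_cast
        ring
      · rw [(hfail N h).1, Real.log_div (hdpos N).ne' two_ne_zero, ih, hcard, if_neg h]
        push_cast
        ring
  -- constants
  have hlog2 : 0 < Real.log 2 := Real.log_pos one_lt_two
  set lam : ℝ := - Real.log ρ with hlamdef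
  have hlam : 0 < lam := by
    simp only [hlamdef]
    linarith [Real.log_neg hρ0 hρ1]
  set N₀ : ℕ := ⌊B / d 0⌋₊ + 1 with hN₀def
  set A : ℝ := (max (Real.log (c₂ * F 0)) 0 + 2) / lam with hAdef
  have hA : 0 < A := div_pos (by positivity) hlam
  set c₃ : ℝ := (max (Real.log (2 * Λ * d 0)) 0 + 1) / Real.log 2 with hc₃def
  have hc₃ : 0 < c₃ := div_pos (by positivity) hlog2
  set C' : ℝ := 2 * A + 2 * (N₀ : ℝ) + c₃ with hC'def
  have hC' : 0 < C' := by positivity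
  refine ⟨C' + 2, by positivity, ?_⟩
  intro ε hε hε1
  set Eps : ℝ := 1 + Real.log (1/ε) with hEpsdef
  have hlog1ε : 0 ≤ Real.log (1/ε) := Real.log_nonneg ((le_div_iff₀ hε).mpr (by linarith))
  have hEps1 : 1 ≤ Eps := by simp only [hEpsdef]; linarith
  -- main estimate
  have hmain : ∀ N : ℕ, (∀ k, k ≤ N → ε < G k) → (N : ℝ) ≤ C' * Eps := by
    intro N hN
    set m : ℝ := min (d 0) (ε/(2*Λ)) with hmdef
    have hm0 : 0 < m := lt_min (hdpos 0) (div_pos hε (by linarith))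
    have hdm : ∀ k, k ≤ N → m ≤ d k := by
      intro k
      induction k with
      | zero => intro _; exact min_le_left _ _
      | succ k ih =>
        intro hk
        have hkN : k ≤ N := le_of_lt (Nat.lt_of_lt_of_le (Nat.lt_succ_self k) hk)
        by_cases hP : P k
        · rw [(hsucc k hP).1]
          have := ih hkN
          linarith [hm0]
        · rw [(hfail k hP).1]
          have hGk := (hfail k hP).2.1
          have hεG := hN k hkN
          have : ε / Λ ≤ d k := by
            rw [div_le_iff₀ hΛ]
            nlinarith
          calc m ≤ ε/(2*Λ) := min_le_right _ _
            _ ≤ d k / 2 := by rw [div_le_div_iff₀ (by linarith) (by norm_num)]; nlinarith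
    set S : ℕ := ((range N).filter P).card with hSdef
    set S2 : ℕ := s2 N with hS2def
    set Sb : ℕ := ((range N).filter (fun j => P j ∧ ¬ Q j)).card with hSbdef
    have hsplit : S ≤ S2 + Sb := by
      have hsub : (range N).filter P ⊆
          ((range N).filter (fun j => P j ∧ Q j)) ∪ ((range N).filter (fun j => P j ∧ ¬ Q j)) := by
        intro a ha
        simp only [mem_filter, mem_union] at ha ⊢
        tauto
      calc S ≤ (((range N).filter (fun j => P j ∧ Q j))
            ∪ ((range N).filter (fun j => P j ∧ ¬ Q j))).card := card_le_card hsub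
        _ ≤ S2 + Sb := card_union_le _ _
    have hSb : Sb ≤ N₀ := by
      have hsub : (range N).filter (fun j => P j ∧ ¬ Q j) ⊆ range N₀ := by
        intro j hj
        simp only [mem_filter, mem_range] at hj ⊢
        obtain ⟨hjN, hPj, hQj⟩ := hj
        have hall : ∀ i, i < j → P i := hnoQ j hQj
        have hdj : d j = 2 ^ j * d 0 := hprefix j hall
        have h2j : (2:ℝ) ^ j ≤ B / d 0 := by
          rw [le_div_iff₀ (hdpos 0)]
          rw [← hdj]
          exact hdB j
        have hj2 : (j : ℝ) < 2 ^ j := by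
          have := Nat.lt_two_pow_self (n := j)
          exact_mod_cast this
        have : (j : ℝ) < B / d 0 := lt_of_lt_of_le hj2 h2j
        have : j ≤ ⌊B / d 0⌋₊ := Nat.le_floor this.le
        omega
      calc Sb ≤ (range N₀).card := card_le_card hsub
        _ = N₀ := card_range _
    have hS2bound : (S2 : ℝ) * lam ≤ max (Real.log (c₂ * F 0)) 0 + 2 * Real.log (1/ε) := by
      have hFN : ε^2 / c₂ < F N := by
        have h1 := hG N
        have h2 := hN N le_rfl
        have h3 : ε^2 < G N^2 := by
          rw [pow_two, pow_two]
          exact mul_lt_mul' h2.le h2 hε.le (hε.trans h2)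
        rw [div_lt_iff₀ hc₂]
        linarith
      have hFN2 : F N ≤ F 0 * ρ ^ S2 := hFs2 N
      have hpos1 : 0 < ε^2/c₂ := by positivity
      have hlt : ε^2/c₂ < F 0 * ρ ^ S2 := lt_of_lt_of_le hFN hFN2
      have hlog : Real.log (ε^2/c₂) < Real.log (F 0 * ρ ^ S2) := Real.log_lt_log hpos1 hlt
      rw [Real.log_div (by positivity) hc₂.ne', Real.log_pow, Real.log_mul hF0.ne' (by positivity),
        Real.log_pow] at hlog
      have hc2F : Real.log c₂ + Real.log (F 0) = Real.log (c₂ * F 0) := (Real.log_mul hc₂.ne' hF0.ne').symm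
      have hinv : Real.log (1/ε) = - Real.log ε := by
        rw [one_div, Real.log_inv]
      simp only [hlamdef]
      have hmax : Real.log (c₂ * F 0) ≤ max (Real.log (c₂ * F 0)) 0 := le_max_left _ _
      push_cast at hlog ⊢
      nlinarith [hlog, hc2F, hinv, hmax]
    have hS2A : (S2 : ℝ) ≤ A * Eps := by
      have h1 : (S2 : ℝ) ≤ (max (Real.log (c₂ * F 0)) 0 + 2 * Real.log (1/ε)) / lam := by
        rw [le_div_iff₀ hlam]
        exact hS2bound
      have h2 : max (Real.log (c₂ * F 0)) 0 + 2 * Real.log (1/ε)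
          ≤ (max (Real.log (c₂ * F 0)) 0 + 2) * Eps := by
        simp only [hEpsdef]
        have hmax0 : 0 ≤ max (Real.log (c₂ * F 0)) 0 := le_max_right _ _
        nlinarith
      calc (S2:ℝ) ≤ _ := h1
        _ ≤ ((max (Real.log (c₂ * F 0)) 0 + 2) * Eps) / lam := by
            exact div_le_div_of_nonneg_right h2 hlam.le
        _ = A * Eps := by simp only [hAdef]; ring
    have hcount : (N : ℝ) ≤ 2 * (S:ℝ) + c₃ * Eps := by
      have hlogN := hlogd N
      have hdmN : m ≤ d N := hdm N le_rfl
      have hlogm : Real.log m ≤ Real.log (d N) := Real.log_le_log hm0 hdmN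
      have hkey : ((N:ℝ) - 2 * S) * Real.log 2 ≤ Real.log (d 0) - Real.log m := by
        have : Real.log (d 0) - Real.log (d N) = ((N:ℝ) - 2*S) * Real.log 2 := by
          rw [hlogN]; ring
        linarith
      have hbound : Real.log (d 0) - Real.log m ≤ max (Real.log (2 * Λ * d 0)) 0 + Real.log (1/ε) := by
        rcases min_cases (d 0) (ε/(2*Λ)) with ⟨hmeq, _⟩ | ⟨hmeq, _⟩
        · rw [hmdef, hmeq]
          simp only [sub_self]
          positivity
        · rw [hmdef, hmeq]
          have h2Λ : (0:ℝ) < 2 * Λ := by linarith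
          rw [Real.log_div hε.ne' h2Λ.ne']
          have h1 : Real.log (2 * Λ * d 0) = Real.log (2*Λ) + Real.log (d 0) :=
            Real.log_mul h2Λ.ne' (hdpos 0).ne'
          have h2 : Real.log (1/ε) = - Real.log ε := by rw [one_div, Real.log_inv]
          have h3 : Real.log (2 * Λ * d 0) ≤ max (Real.log (2 * Λ * d 0)) 0 := le_max_left _ _
          linarith
      have hb2 : max (Real.log (2 * Λ * d 0)) 0 + Real.log (1/ε)
          ≤ (max (Real.log (2 * Λ * d 0)) 0 + 1) * Eps := by
        simp only [hEpsdef]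
        have hmax0 : 0 ≤ max (Real.log (2 * Λ * d 0)) 0 := le_max_right _ _
        nlinarith
      have : ((N:ℝ) - 2 * S) * Real.log 2 ≤ (max (Real.log (2 * Λ * d 0)) 0 + 1) * Eps :=
        hkey.trans (hbound.trans hb2)
      have hfinal : (N:ℝ) - 2*S ≤ c₃ * Eps := by
        rw [hc₃def, div_mul_eq_mul_div, le_div_iff₀ hlog2]
        calc ((N:ℝ) - 2*S) * Real.log 2 ≤ (max (Real.log (2 * Λ * d 0)) 0 + 1) * Eps := this
          _ = _ := by ring
      linarith
    have hSbound : (S : ℝ) ≤ A * Eps + N₀ := by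
      have : (S:ℝ) ≤ (S2:ℝ) + (Sb:ℝ) := by exact_mod_cast hsplit
      have h2 : (Sb:ℝ) ≤ (N₀:ℝ) := by exact_mod_cast hSb
      linarith
    calc (N:ℝ) ≤ 2 * S + c₃ * Eps := hcount
      _ ≤ 2 * (A * Eps + N₀) + c₃ * Eps := by linarith
      _ ≤ 2 * A * Eps + 2 * (N₀:ℝ) * Eps + c₃ * Eps := by nlinarith [mul_nonneg (Nat.cast_nonneg N₀ : (0:ℝ) ≤ (N₀:ℝ)) (by linarith : (0:ℝ) ≤ Eps - 1)]
      _ = C' * Eps := by simp only [hC'def]; ring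
  -- conclude
  by_contra hcon
  push_neg at hcon
  set N : ℕ := ⌊(C' + 2) * Eps⌋₊ with hNdef
  have hEpspos : 0 < Eps := by linarith
  have hNle : (N : ℝ) ≤ (C' + 2) * Eps := Nat.floor_le (by positivity)
  have hall : ∀ k, k ≤ N → ε < G k := by
    intro k hk
    apply hcon
    calc (k:ℝ) ≤ (N:ℝ) := by exact_mod_cast hk
      _ ≤ (C' + 2) * Eps := hNle
  have h1 : (N : ℝ) ≤ C' * Eps := hmain N hall
  have h2 : (C' + 2) * Eps < (N:ℝ) + 1 := Nat.lt_floor_add_one _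
  nlinarith

/-- Worst-case complexity of the derivative-free OptimIST framework in the strongly convex case:
if `f` is `σ`-strongly convex, then there is a constant `C > 0` such that for every `ε ∈ (0, 1]`
some iterate `k ≤ C (1 + log (1/ε))` satisfies `‖∇f (x k)‖ ≤ ε`. -/
theorem optimist_complexity_strongly_convex {n : ℕ}
    (f : EuclideanSpace ℝ (Fin n) → ℝ)
    (hdiff : Differentiable ℝ f)
    (L : ℝ) (hL : 0 < L)
    (hlip : ∀ y z, ‖gradient f y - gradient f z‖ ≤ L * ‖y - z‖)
    (hbdd : BddBelow (Set.range f))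
    (η ζ : ℝ) (hη : 0 < η) (hζ : 0 < ζ)
    (x ghat : ℕ → EuclideanSpace ℝ (Fin n)) (δ : ℕ → ℝ) (hδ : ∀ k, 0 < δ k)
    (hmono : ∀ k, f (x (k + 1)) ≤ f (x k))
    (hsd : ∀ k, f (x (k + 1)) ≤
      max (f (x k) - η * δ k ^ 2) (f (x k - (δ k / ‖ghat k‖) • ghat k)))
    (hacc : ∀ k, ‖ghat k - gradient f (x k)‖ ≤ ζ * δ k)
    (hupd : ∀ k,
      ((η * δ k ≤ ‖ghat k‖ ∧ f (x (k + 1)) ≤ f (x k) - η * δ k ^ 2) → δ (k + 1) = 2 * δ k) ∧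
      (¬(η * δ k ≤ ‖ghat k‖ ∧ f (x (k + 1)) ≤ f (x k) - η * δ k ^ 2) → δ (k + 1) = δ k / 2))
    (σ : ℝ) (hσ : 0 < σ)
    (hstrong : ConvexOn ℝ Set.univ (fun y => f y - σ / 2 * ‖y‖ ^ 2))
    (hg0 : gradient f (x 0) ≠ 0) :
    ∃ C : ℝ, 0 < C ∧ ∀ ε : ℝ, 0 < ε → ε ≤ 1 →
      ∃ k : ℕ, (k : ℝ) ≤ C * (1 + Real.log (1 / ε)) ∧ ‖gradient f (x k)‖ ≤ ε := by
  classical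
  have hfderiv : ∀ a, fderiv ℝ f a
      = InnerProductSpace.toDual ℝ (EuclideanSpace ℝ (Fin n)) (gradient f a) :=
    fun a => ((hdiff a).hasGradientAt.hasFDerivAt).fderiv
  have happ : ∀ a v, fderiv ℝ f a v = (inner ℝ (gradient f a) v : ℝ) := by
    intro a v
    rw [hfderiv a, InnerProductSpace.toDual_apply_apply]
  -- descent lemma
  have hdl : ∀ a b : EuclideanSpace ℝ (Fin n),
      f b ≤ f a + (inner ℝ (gradient f a) (b - a) : ℝ) + L * ‖b - a‖^2 := by
    intro a b
    have hseg : Convex ℝ (segment ℝ a b) := convex_segment a b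
    have hbound : ∀ z ∈ segment ℝ a b,
        ‖fderiv ℝ f z - fderiv ℝ f a‖ ≤ L * ‖b - a‖ := by
      intro z hz
      have h2 : ‖z - a‖ ≤ ‖b - a‖ := by
        obtain ⟨u, v, hu, hv, huv, rfl⟩ := hz
        have he : u • a + v • b - a = v • (b - a) := by
          have : a = (u + v) • a := by rw [huv, one_smul]
          nth_rewrite 2 [this]
          module
        rw [he, norm_smul, Real.norm_eq_abs, abs_of_nonneg hv]
        nlinarith [norm_nonneg (b - a)]
      calc ‖fderiv ℝ f z - fderiv ℝ f a‖
          = ‖gradient f z - gradient f a‖ := by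
            rw [hfderiv z, hfderiv a, ← map_sub]
            exact (InnerProductSpace.toDual ℝ _).norm_map _
        _ ≤ L * ‖z - a‖ := hlip z a
        _ ≤ L * ‖b - a‖ := mul_le_mul_of_nonneg_left h2 hL.le
    have key := hseg.norm_image_sub_le_of_norm_fderiv_le'
      (fun z _ => hdiff z) hbound (left_mem_segment ℝ a b) (right_mem_segment ℝ a b)
    rw [happ, Real.norm_eq_abs] at key
    have := (abs_le.mp key).2
    nlinarith [this]
  -- first-order strong convexity
  have hfo : ∀ a b : EuclideanSpace ℝ (Fin n),
      f a + (inner ℝ (gradient f a) (b - a) : ℝ) + σ/2 * ‖b - a‖^2 ≤ f b := by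
    intro a b
    set h : EuclideanSpace ℝ (Fin n) → ℝ := fun y => f y - σ / 2 * ‖y‖ ^ 2 with hhdef
    set v : EuclideanSpace ℝ (Fin n) := b - a with hvdef
    set φ : ℝ → ℝ := fun t => h (t • v + a) with hφdef
    have hφconv : ConvexOn ℝ Set.univ φ := by
      have hcomp := hstrong.comp_affineMap (AffineMap.lineMap a b)
      have heq : φ = (fun y => f y - σ / 2 * ‖y‖ ^ 2) ∘ (AffineMap.lineMap a b) := by
        funext t
        simp only [hφdef, hhdef, Function.comp_apply, AffineMap.lineMap_apply, vsub_eq_sub,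
          vadd_eq_add, hvdef]
      rw [heq]
      simpa using hcomp
    -- derivative of φ at 0
    have hc : HasDerivAt (fun t : ℝ => t • v + a) v 0 := by
      simpa using ((hasDerivAt_id (0:ℝ)).smul_const v).add_const a
    have h1 : HasDerivAt (fun t : ℝ => f (t • v + a)) ((inner ℝ (gradient f a) v : ℝ)) 0 := by
      have ha0 : (0:ℝ) • v + a = a := by simp
      have hf' : HasFDerivAt f (fderiv ℝ f ((0:ℝ) • v + a)) ((0:ℝ) • v + a) :=
        (hdiff _).hasFDerivAt
      have := hf'.comp_hasDerivAt 0 hc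
      rw [ha0] at this
      rw [happ] at this
      exact this
    have hexp : ∀ t : ℝ, ‖t • v + a‖^2 = ‖a‖^2 + 2*(inner ℝ a v : ℝ)*t + ‖v‖^2*t^2 := by
      intro t
      rw [add_comm (t • v) a, norm_add_sq_real, real_inner_smul_right, norm_smul,
        Real.norm_eq_abs, mul_pow, sq_abs]
      ring
    have h2 : HasDerivAt (fun t : ℝ => σ/2 * ‖t • v + a‖^2) (σ * (inner ℝ a v : ℝ)) 0 := by
      have hpoly : HasDerivAt
          (fun t : ℝ => σ/2 * (‖a‖^2 + 2*(inner ℝ a v : ℝ)*t + ‖v‖^2*t^2))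
          (σ/2 * ((0 + 2*(inner ℝ a v : ℝ)*1) + ‖v‖^2*(2*0^1))) 0 := by
        apply HasDerivAt.const_mul
        exact ((hasDerivAt_const (0:ℝ) (‖a‖^2)).add
          ((hasDerivAt_id (0:ℝ)).const_mul (2*(inner ℝ a v : ℝ)))).add
          ((hasDerivAt_pow 2 (0:ℝ)).const_mul (‖v‖^2))
      have heq : (fun t : ℝ => σ/2 * ‖t • v + a‖^2)
          = (fun t : ℝ => σ/2 * (‖a‖^2 + 2*(inner ℝ a v : ℝ)*t + ‖v‖^2*t^2)) := by
        funext t; rw [hexp t]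
      rw [heq]
      convert hpoly using 1
      ring
    have hφder : HasDerivAt φ ((inner ℝ (gradient f a) v : ℝ) - σ * (inner ℝ a v : ℝ)) 0 := by
      have := h1.sub h2
      exact this
    have hslope := hφconv.le_slope_of_hasDerivAt (Set.mem_univ (0:ℝ)) (Set.mem_univ (1:ℝ))
      (by norm_num) hφder
    rw [slope_def_field] at hslope
    have hφ1 : φ 1 = h b := by
      simp only [hφdef, one_smul, hvdef]
      congr 1
      abel
    have hφ0 : φ 0 = h a := by simp [hφdef]
    rw [hφ1, hφ0] at hslope
    simp only [hhdef] at hslope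
    have e1 : ‖v‖^2 = ‖b‖^2 - 2*(inner ℝ b a : ℝ) + ‖a‖^2 := by
      rw [hvdef, norm_sub_sq_real]
    have e2 : (inner ℝ a v : ℝ) = (inner ℝ a b : ℝ) - ‖a‖^2 := by
      rw [hvdef, inner_sub_right, real_inner_self_eq_norm_sq]
    have e3 : (inner ℝ b a : ℝ) = (inner ℝ a b : ℝ) := real_inner_comm a b
    have hsl' : (inner ℝ (gradient f a) v : ℝ) - σ * (inner ℝ a v : ℝ)
        ≤ (f b - σ/2*‖b‖^2 - (f a - σ/2*‖a‖^2)) / (1 - 0) := hslope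
    rw [hvdef]
    nlinarith [hsl', e1, e2, e3]
  -- infimum
  set fs : ℝ := sInf (Set.range f) with hfsdef
  have hfs : ∀ y, fs ≤ f y := fun y => csInf_le hbdd ⟨y, rfl⟩
  have hPL : ∀ a : EuclideanSpace ℝ (Fin n), f a - fs ≤ ‖gradient f a‖^2/(2*σ) := by
    intro a
    have hlow : f a - ‖gradient f a‖^2/(2*σ) ≤ fs := by
      refine le_csInf (Set.range_nonempty f) ?_
      rintro b ⟨y, rfl⟩
      have h1 := hfo a y
      have h2 : -(‖gradient f a‖ * ‖y - a‖) ≤ (inner ℝ (gradient f a) (y - a) : ℝ) := by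
        have := abs_real_inner_le_norm (gradient f a) (y - a)
        linarith [(abs_le.mp this).1]
      have h3 : ‖gradient f a‖*‖y - a‖ - σ/2*‖y - a‖^2 ≤ ‖gradient f a‖^2/(2*σ) := by
        rw [le_div_iff₀ (by linarith : (0:ℝ) < 2*σ)]
        nlinarith [sq_nonneg (‖gradient f a‖ - σ*‖y - a‖)]
      linarith [h1, h2, h3]
    linarith
  have hLB : ∀ a : EuclideanSpace ℝ (Fin n), ‖gradient f a‖^2 ≤ 4*L*(f a - fs) := by
    intro a
    set g := gradient f a with hgdef
    have h1 := hdl a (a - (1/(2*L)) • g)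
    have e0 : a - (1/(2*L)) • g - a = -((1/(2*L)) • g) := by abel
    rw [e0] at h1
    have e1 : (inner ℝ g (-((1/(2*L)) • g)) : ℝ) = -((1/(2*L)) * ‖g‖^2) := by
      rw [inner_neg_right, real_inner_smul_right, real_inner_self_eq_norm_sq]
    have e2 : ‖-((1/(2*L)) • g)‖^2 = (1/(2*L))^2 * ‖g‖^2 := by
      rw [norm_neg, norm_smul, Real.norm_eq_abs, mul_pow, sq_abs]
    rw [e1, e2] at h1
    have h3 := hfs (a - (1/(2*L)) • g)
    have hL2 : (0:ℝ) < 2*L := by linarith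
    have : f a - (1/(4*L)) * ‖g‖^2 = f a - (1/(2*L)) * ‖g‖^2 + L * ((1/(2*L))^2 * ‖g‖^2) := by
      field_simp
      ring
    have h9 : fs ≤ f a - (1/(4*L)) * ‖g‖^2 := by
      rw [this]; linarith [h1, h3]
    have h10 : (1/(4*L)) * ‖g‖^2 ≤ f a - fs := by linarith
    calc ‖g‖^2 = 4*L*((1/(4*L)) * ‖g‖^2) := by field_simp
      _ ≤ 4*L*(f a - fs) := mul_le_mul_of_nonneg_left h10 (by positivity)
  have hF0pos : 0 < f (x 0) - fs := by
    have h1 := hLB (x 0)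
    have h2 : 0 < ‖gradient f (x 0)‖ := norm_pos_iff.mpr hg0
    nlinarith
  -- success lemma
  have hsl : ∀ k, (η + ζ + L) * δ k ≤ ‖ghat k‖ →
      (η * δ k ≤ ‖ghat k‖ ∧ f (x (k + 1)) ≤ f (x k) - η * δ k ^ 2) := by
    intro k hk
    have hδk := hδ k
    have hgh : (0:ℝ) < ‖ghat k‖ := lt_of_lt_of_le (by positivity) hk
    constructor
    · nlinarith
    · have hb := hdl (x k) (x k - (δ k / ‖ghat k‖) • ghat k)
      have e0 : x k - (δ k / ‖ghat k‖) • ghat k - x k = -((δ k / ‖ghat k‖) • ghat k) := by abel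
      rw [e0] at hb
      have e1 : (inner ℝ (gradient f (x k)) (-((δ k / ‖ghat k‖) • ghat k)) : ℝ)
          = -((δ k / ‖ghat k‖) * (inner ℝ (gradient f (x k)) (ghat k) : ℝ)) := by
        rw [inner_neg_right, real_inner_smul_right]
      have e2 : ‖-((δ k / ‖ghat k‖) • ghat k)‖ = δ k := by
        rw [norm_neg, norm_smul, Real.norm_eq_abs, abs_of_pos (div_pos hδk hgh),
          div_mul_cancel₀ _ hgh.ne']
      rw [e1, e2] at hb
      -- inner bound
      have hip : ‖ghat k‖^2 - ζ * δ k * ‖ghat k‖ ≤ (inner ℝ (gradient f (x k)) (ghat k) : ℝ) := by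
        have hd : (inner ℝ (gradient f (x k) - ghat k) (ghat k) : ℝ)
            = (inner ℝ (gradient f (x k)) (ghat k) : ℝ) - (inner ℝ (ghat k) (ghat k) : ℝ) := by
          rw [inner_sub_left]
        have habs := abs_real_inner_le_norm (gradient f (x k) - ghat k) (ghat k)
        have hnrm : ‖gradient f (x k) - ghat k‖ ≤ ζ * δ k := by
          rw [norm_sub_rev]; exact hacc k
        have hself : (inner ℝ (ghat k) (ghat k) : ℝ) = ‖ghat k‖^2 := real_inner_self_eq_norm_sq _
        have h5 : ‖gradient f (x k) - ghat k‖ * ‖ghat k‖ ≤ ζ * δ k * ‖ghat k‖ :=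
          mul_le_mul_of_nonneg_right hnrm (norm_nonneg _)
        have h6 := (abs_le.mp habs).1
        nlinarith [h5, h6, hd, hself]
      have hq : (δ k / ‖ghat k‖) * (‖ghat k‖^2 - ζ * δ k * ‖ghat k‖)
          = δ k * ‖ghat k‖ - ζ * δ k ^ 2 := by
        field_simp
      have h7 : δ k * ‖ghat k‖ ≥ (η + ζ + L) * δ k ^ 2 := by nlinarith
      have h8 : f (x k - (δ k / ‖ghat k‖) • ghat k) ≤ f (x k) - η * δ k ^ 2 := by
        have hc : (δ k / ‖ghat k‖) * (‖ghat k‖^2 - ζ * δ k * ‖ghat k‖)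
            ≤ (δ k / ‖ghat k‖) * (inner ℝ (gradient f (x k)) (ghat k) : ℝ) :=
          mul_le_mul_of_nonneg_left hip (div_pos hδk hgh).le
        rw [hq] at hc
        nlinarith [hb, hc]
      exact (hsd k).trans (max_le (le_refl _) h8)
  -- apply the core lemma
  have hΛpos : (0:ℝ) < η + ζ + L + ζ := by linarith
  have hFnn' : ∀ k, 0 ≤ f (x k) - fs := fun k => by linarith [hfs (x k)]
  have hFmono' : ∀ k, f (x (k+1)) - fs ≤ f (x k) - fs := fun k => by linarith [hmono k]
  have hG' : ∀ k, ‖gradient f (x k)‖ ^ 2 ≤ 4*L*(f (x k) - fs) := fun k => hLB (x k)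
  have hsucc' : ∀ k, (η * δ k ≤ ‖ghat k‖ ∧ f (x (k+1)) ≤ f (x k) - η * δ k ^ 2) →
      δ (k+1) = 2 * δ k ∧ f (x (k+1)) - fs ≤ (f (x k) - fs) - η * δ k ^ 2 :=
    fun k hP => ⟨(hupd k).1 hP, by linarith [hP.2]⟩
  have hfail' : ∀ k, ¬(η * δ k ≤ ‖ghat k‖ ∧ f (x (k+1)) ≤ f (x k) - η * δ k ^ 2) →
      δ (k+1) = δ k / 2 ∧ ‖gradient f (x k)‖ ≤ (η + ζ + L + ζ) * δ k ∧
      f (x k) - fs ≤ ((η + ζ + L + ζ)^2/(2*σ)) * δ k ^ 2 := by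
    intro k hnP
    refine ⟨(hupd k).2 hnP, ?_, ?_⟩
    · have hgh : ‖ghat k‖ < (η + ζ + L) * δ k := by
        by_contra hcon
        push_neg at hcon
        exact hnP (hsl k hcon)
      have h1 : ‖gradient f (x k)‖ ≤ ‖gradient f (x k) - ghat k‖ + ‖ghat k‖ := by
        have he : gradient f (x k) - ghat k + ghat k = gradient f (x k) := by abel
        calc ‖gradient f (x k)‖ = ‖gradient f (x k) - ghat k + ghat k‖ := by rw [he]
          _ ≤ ‖gradient f (x k) - ghat k‖ + ‖ghat k‖ := norm_add_le _ _
      have h2 : ‖gradient f (x k) - ghat k‖ ≤ ζ * δ k := by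
        rw [norm_sub_rev]; exact hacc k
      linarith
    · have hgh : ‖ghat k‖ < (η + ζ + L) * δ k := by
        by_contra hcon
        push_neg at hcon
        exact hnP (hsl k hcon)
      have h1 : ‖gradient f (x k)‖ ≤ (η + ζ + L + ζ) * δ k := by
        have ha : ‖gradient f (x k)‖ ≤ ‖gradient f (x k) - ghat k‖ + ‖ghat k‖ := by
          have he : gradient f (x k) - ghat k + ghat k = gradient f (x k) := by abel
          calc ‖gradient f (x k)‖ = ‖gradient f (x k) - ghat k + ghat k‖ := by rw [he]
            _ ≤ ‖gradient f (x k) - ghat k‖ + ‖ghat k‖ := norm_add_le _ _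
        have h2 : ‖gradient f (x k) - ghat k‖ ≤ ζ * δ k := by
          rw [norm_sub_rev]; exact hacc k
        linarith
      have h3 : ‖gradient f (x k)‖^2 ≤ ((η + ζ + L + ζ) * δ k)^2 :=
        pow_le_pow_left₀ (norm_nonneg _) h1 2
      have h4 := hPL (x k)
      have hσ2 : (0:ℝ) < 2*σ := by linarith
      rw [le_div_iff₀ hσ2] at h4  -- f a - fs ≤ ‖g‖^2/(2σ) → (f a - fs)*(2σ) ≤ ‖g‖^2
      have : (f (x k) - fs) * (2*σ) ≤ ((η + ζ + L + ζ) * δ k)^2 := le_trans h4 h3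
      rw [div_mul_eq_mul_div, le_div_iff₀ hσ2]
      calc (f (x k) - fs) * (2*σ) ≤ ((η + ζ + L + ζ) * δ k)^2 := this
        _ = (η + ζ + L + ζ)^2 * δ k ^ 2 := by ring
  exact optimist_core
    (fun k => f (x k) - fs) δ (fun k => ‖gradient f (x k)‖)
    (fun k => η * δ k ≤ ‖ghat k‖ ∧ f (x (k+1)) ≤ f (x k) - η * δ k ^ 2)
    η ((η + ζ + L + ζ)^2/(2*σ)) (η + ζ + L + ζ) (4*L)
    hη (by positivity) hΛpos (by positivity)
    hδ hF0pos hFnn' hFmono' hG' hsucc' hfail'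
end
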